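/- arXiv:1908.03551 — 4 statements merged into one kernel-verified Lean document; each statement's English description precedes it below -/
import Mathlib

section
/- Let Σ = {a, b} with a I b, and let L = ⟦(ab)✶(a✶ + b✶)⟧. Then [L] = Σ* (in particular [L] is regular), but for every N ∈ ℕ, L does not have rank at most N; i.e., L is a regular language whose trace closure is regular but which has no rank. -/
open RegularExpression
open scoped Classical

universe u

variable {α : Type u}

/-- Two words are independent if every letter of the first is independent
of every letter of the second. -/
def WIndep (I : α → α → Prop) (u v : List α) : Prop :=
  ∀ a ∈ u, ∀ b ∈ v, I a b

/-- Trace equivalence: the least equivalence relation on words containing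
all pairs (x ++ [a,b] ++ y, x ++ [b,a] ++ y) with a I b. -/
inductive TrEq (I : α → α → Prop) : List α → List α → Prop
  | swap (x y : List α) {a b : α} : I a b → TrEq I (x ++ [a, b] ++ y) (x ++ [b, a] ++ y)
  | refl (u : List α) : TrEq I u u
  | symm {u v : List α} : TrEq I u v → TrEq I v u
  | trans {u v w : List α} : TrEq I u v → TrEq I v w → TrEq I u w

/-- Trace closure of a language. -/
def TrClosure (I : α → α → Prop) (L : Set (List α)) : Set (List α) :=
  {w | ∃ z ∈ L, TrEq I w z}

/-- u ⊲ z ⊳ v with exactly n blocks of u: there are nonempty words u₁,…,uₙ and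
words v₀,…,vₙ (with v₁,…,v_{n-1} nonempty) such that u = u₁⋯uₙ, v = v₀⋯vₙ,
z = v₀u₁v₁⋯uₙvₙ and vⱼ I uᵢ whenever j < i. -/
def ScatN (I : α → α → Prop) (n : ℕ) (u z v : List α) : Prop :=
  ∃ us vs : ℕ → List α,
    (∀ i, 1 ≤ i → i ≤ n → us i ≠ []) ∧
    (∀ j, 1 ≤ j → j ≤ n - 1 → vs j ≠ []) ∧
    u = ((List.range n).map (fun i => us (i + 1))).flatten ∧
    v = ((List.range (n + 1)).map vs).flatten ∧
    z = vs 0 ++ ((List.range n).map (fun i => us (i + 1) ++ vs (i + 1))).flatten ∧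
    (∀ i j, 1 ≤ i → i ≤ n → j < i → WIndep I (vs j) (us i))

/-- u ⊲ z ⊳ v -/
def Scat (I : α → α → Prop) (u z v : List α) : Prop :=
  ∃ n, ScatN I n u z v

/-- u ∼⊲ z ⊳ v -/
def EqScat (I : α → α → Prop) (u z v : List α) : Prop :=
  ∃ u', TrEq I u u' ∧ Scat I u' z v

/-- u ∼⊲ z ⊳∼ v -/
def EqScatEq (I : α → α → Prop) (u z v : List α) : Prop :=
  ∃ u' v', TrEq I u u' ∧ Scat I u' z v' ∧ TrEq I v' v

/-- u ∼⊲_N z ⊳∼ v : as EqScatEq, with the number of blocks bounded by N -/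
def EqScatEqLe (I : α → α → Prop) (N : ℕ) (u z v : List α) : Prop :=
  ∃ u' v', TrEq I u u' ∧ (∃ n ≤ N, ScatN I n u' z v') ∧ TrEq I v' v

/-- Reordering concatenation of words. -/
def rconc (I : α → α → Prop) : List α → List α → Set (List α)
  | [], v => {v}
  | a :: u, [] => {a :: u}
  | a :: u, b :: v =>
      (List.cons a) '' rconc I u (b :: v) ∪
      {z | WIndep I (a :: u) [b] ∧ ∃ w ∈ rconc I (a :: u) v, z = b :: w}
termination_by u v => u.length + v.length

/-- Reordering concatenation lifted to languages. -/
def rconcL (I : α → α → Prop) (L L' : Set (List α)) : Set (List α) :=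
  {z | ∃ u ∈ L, ∃ v ∈ L', z ∈ rconc I u v}

/-- The reorderable part of a language w.r.t. a word. -/
def RPart (I : α → α → Prop) (u : List α) (L : Set (List α)) : Set (List α) :=
  {v ∈ L | WIndep I v u}

/-- The reordering derivative of a language along a word. -/
def RDeriv (I : α → α → Prop) (u : List α) (L : Set (List α)) : Set (List α) :=
  {v | ∃ z ∈ L, EqScat I u z v}

/-- Syntactic reorderable part of a regexp w.r.t. a letter. -/
noncomputable def Rexp (I : α → α → Prop) (a : α) : RegularExpression α → RegularExpression α
  | zero => zero
  | epsilon => epsilon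
  | char b => if I a b then char b else zero
  | plus E F => plus (Rexp I a E) (Rexp I a F)
  | comp E F => comp (Rexp I a E) (Rexp I a F)
  | RegularExpression.star E => star (Rexp I a E)

/-- Brzozowski reordering derivative of a regexp along a letter. -/
noncomputable def Dexp (I : α → α → Prop) (a : α) : RegularExpression α → RegularExpression α
  | zero => zero
  | epsilon => zero
  | char b => if a = b then epsilon else zero
  | plus E F => plus (Dexp I a E) (Dexp I a F)
  | comp E F => plus (comp (Dexp I a E) F) (comp (Rexp I a E) (Dexp I a F))
  | RegularExpression.star E => comp (star (Rexp I a E)) (comp (Dexp I a E) (star E))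

/-- Syntactic reorderable part along a word. -/
noncomputable def RexpW (I : α → α → Prop) (u : List α) (E : RegularExpression α) :
    RegularExpression α :=
  u.foldl (fun E a => Rexp I a E) E

/-- Brzozowski reordering derivative along a word. -/
noncomputable def DexpW (I : α → α → Prop) (u : List α) (E : RegularExpression α) :
    RegularExpression α :=
  u.foldl (fun E a => Dexp I a E) E

/-- Antimirov reordering parts-of-derivatives along a letter. -/
inductive Antim (I : α → α → Prop) : RegularExpression α → α → RegularExpression α → Prop
  | chr (a : α) : Antim I (char a) a epsilon
  | plusL {E F : RegularExpression α} {a E'} : Antim I E a E' → Antim I (plus E F) a E'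
  | plusR {E F : RegularExpression α} {a F'} : Antim I F a F' → Antim I (plus E F) a F'
  | compL {E F : RegularExpression α} {a E'} : Antim I E a E' → Antim I (comp E F) a (comp E' F)
  | compR {E F : RegularExpression α} {a F'} :
      Antim I F a F' → Antim I (comp E F) a (comp (Rexp I a E) F')
  | st {E : RegularExpression α} {a E'} :
      Antim I E a E' → Antim I (star E) a (comp (star (Rexp I a E)) (comp E' (star E)))

/-- Antimirov reordering parts-of-derivatives along a word. -/
inductive AntimW (I : α → α → Prop) : RegularExpression α → List α → RegularExpression α → Prop
  | nil (E : RegularExpression α) : AntimW I E [] E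
  | snoc {E : RegularExpression α} {u E' a E''} :
      AntimW I E u E' → Antim I E' a E'' → AntimW I E (u ++ [a]) E''

/-- The dependence graph of a word: vertices are positions; distinct positions
are adjacent when their letters are not independent. -/
def depGraph (I : α → α → Prop) (w : List α) : SimpleGraph (Fin w.length) where
  Adj i j := i ≠ j ∧ ¬(I (w.get i) (w.get j) ∧ I (w.get j) (w.get i))
  symm := by
    constructor
    intro i j h
    exact ⟨h.1.symm, fun hc => h.2 ⟨hc.2, hc.1⟩⟩
  loopless := by
    constructor
    intro i h
    exact h.1 rfl

/-- A word is connected if its dependence graph is connected. -/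
def WordConnected (I : α → α → Prop) (w : List α) : Prop :=
  (depGraph I w).Preconnected

/-- Least fixed point star for the trace-closing semantics. -/
def starI (I : α → α → Prop) (L : Set (List α)) : Set (List α) :=
  sInf {X | {([] : List α)} ∪ rconcL I L X ⊆ X}

/-- Trace-closing semantics of regular expressions. -/
def langI (I : α → α → Prop) : RegularExpression α → Set (List α)
  | zero => ∅
  | epsilon => {[]}
  | char a => {[a]}
  | plus E F => langI I E ∪ langI I F
  | comp E F => rconcL I (langI I E) (langI I F)
  | RegularExpression.star E => starI I (langI I E)

/-- L has (scattering) rank at most N. -/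
def HasRankLe (I : α → α → Prop) (L : Set (List α)) (N : ℕ) : Prop :=
  ∀ u v, u ++ v ∈ TrClosure I L → ∃ z ∈ L, EqScatEqLe I N u z v

/-- L has uniform (scattering) rank at most N. -/
def HasUniformRankLe (I : α → α → Prop) (L : Set (List α)) (N : ℕ) : Prop :=
  ∀ w ∈ TrClosure I L, ∃ z ∈ L, ∀ u v, w = u ++ v → EqScatEqLe I N u z v

/-- Star-connected regular expressions. -/
inductive StarConnected (I : α → α → Prop) : RegularExpression α → Prop
  | zero : StarConnected I zero
  | epsilon : StarConnected I epsilon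
  | chr (a : α) : StarConnected I (char a)
  | plus {E F : RegularExpression α} :
      StarConnected I E → StarConnected I F → StarConnected I (plus E F)
  | comp {E F : RegularExpression α} :
      StarConnected I E → StarConnected I F → StarConnected I (comp E F)
  | st {E : RegularExpression α} :
      StarConnected I E → (∀ w ∈ E.matches', WordConnected I w) → StarConnected I (star E)

/-- Refined Antimirov reordering parts-of-derivatives along a letter. -/
inductive RAntim (I : α → α → Prop) :
    RegularExpression α → α → RegularExpression α → RegularExpression α → Prop
  | chr (a : α) : RAntim I (char a) a epsilon epsilon
  | plusL {E F : RegularExpression α} {a El Er} :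
      RAntim I E a El Er → RAntim I (plus E F) a El Er
  | plusR {E F : RegularExpression α} {a Fl Fr} :
      RAntim I F a Fl Fr → RAntim I (plus E F) a Fl Fr
  | compL {E F : RegularExpression α} {a El Er} :
      RAntim I E a El Er → RAntim I (comp E F) a El (comp Er F)
  | compR {E F : RegularExpression α} {a Fl Fr} :
      RAntim I F a Fl Fr → RAntim I (comp E F) a (comp (Rexp I a E) Fl) Fr
  | st {E : RegularExpression α} {a El Er} :
      RAntim I E a El Er →
      RAntim I (star E) a (comp (star (Rexp I a E)) El) (comp Er (star E))

/-- Refined Antimirov relation lifted to nonempty lists of regexps (unbounded). -/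
inductive RAntimL (I : α → α → Prop) :
    List (RegularExpression α) → α → List (RegularExpression α) → Prop
  | split {Γ Δ : List (RegularExpression α)} {E : RegularExpression α} {a El Er} :
      RAntim I E a El Er →
      RAntimL I (Γ ++ E :: Δ) a (Γ.map (Rexp I a) ++ El :: Er :: Δ)
  | dropL {Γ Δ : List (RegularExpression α)} {E : RegularExpression α} {a El Er} :
      RAntim I E a El Er → [] ∈ El.matches' → Γ ≠ [] →
      RAntimL I (Γ ++ E :: Δ) a (Γ.map (Rexp I a) ++ Er :: Δ)
  | dropR {Γ Δ : List (RegularExpression α)} {E : RegularExpression α} {a El Er} :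
      RAntim I E a El Er → [] ∈ Er.matches' → Δ ≠ [] →
      RAntimL I (Γ ++ E :: Δ) a (Γ.map (Rexp I a) ++ El :: Δ)
  | dropBoth {Γ Δ : List (RegularExpression α)} {E : RegularExpression α} {a El Er} :
      RAntim I E a El Er → [] ∈ El.matches' → [] ∈ Er.matches' → Γ ≠ [] → Δ ≠ [] →
      RAntimL I (Γ ++ E :: Δ) a (Γ.map (Rexp I a) ++ Δ)

/-- Refined Antimirov relation along a word (unbounded). -/
inductive RAntimW (I : α → α → Prop) :
    RegularExpression α → List α → List (RegularExpression α) → Prop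
  | nil (E : RegularExpression α) : RAntimW I E [] [E]
  | snoc {E : RegularExpression α} {u Γ a Γ'} :
      RAntimW I E u Γ → RAntimL I Γ a Γ' → RAntimW I E (u ++ [a]) Γ'

/-- N-bounded refined Antimirov relation lifted to nonempty lists of regexps. -/
inductive RAntimLN (I : α → α → Prop) (N : ℕ) :
    List (RegularExpression α) → α → List (RegularExpression α) → Prop
  | split {Γ Δ : List (RegularExpression α)} {E : RegularExpression α} {a El Er} :
      RAntim I E a El Er → Γ.length + Δ.length < N →
      RAntimLN I N (Γ ++ E :: Δ) a (Γ.map (Rexp I a) ++ El :: Er :: Δ)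
  | dropL {Γ Δ : List (RegularExpression α)} {E : RegularExpression α} {a El Er} :
      RAntim I E a El Er → [] ∈ El.matches' → Γ ≠ [] →
      RAntimLN I N (Γ ++ E :: Δ) a (Γ.map (Rexp I a) ++ Er :: Δ)
  | dropR {Γ Δ : List (RegularExpression α)} {E : RegularExpression α} {a El Er} :
      RAntim I E a El Er → [] ∈ Er.matches' → Δ ≠ [] →
      RAntimLN I N (Γ ++ E :: Δ) a (Γ.map (Rexp I a) ++ El :: Δ)
  | dropBoth {Γ Δ : List (RegularExpression α)} {E : RegularExpression α} {a El Er} :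
      RAntim I E a El Er → [] ∈ El.matches' → [] ∈ Er.matches' → Γ ≠ [] → Δ ≠ [] →
      RAntimLN I N (Γ ++ E :: Δ) a (Γ.map (Rexp I a) ++ Δ)

/-- N-bounded refined Antimirov relation along a word. -/
inductive RAntimWN (I : α → α → Prop) (N : ℕ) :
    RegularExpression α → List α → List (RegularExpression α) → Prop
  | nil (E : RegularExpression α) : RAntimWN I N E [] [E]
  | snoc {E : RegularExpression α} {u Γ a Γ'} :
      RAntimWN I N E u Γ → RAntimLN I N Γ a Γ' → RAntimWN I N E (u ++ [a]) Γ'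



section Helpers12
variable {I : Bool → Bool → Prop}

private lemma treq_perm' {β : Type u} {J : β → β → Prop} {u v : List β} (h : TrEq J u v) :
    u.Perm v := by
  induction h with
  | swap x y hab =>
      simpa [List.append_assoc] using List.Perm.append_left x (List.Perm.swap _ _ y)
  | refl u => exact List.Perm.refl u
  | symm _ ih => exact ih.symm
  | trans _ _ ih1 ih2 => exact ih1.trans ih2

private lemma treq_cons' {β : Type u} {J : β → β → Prop} (c : β) {u v : List β}
    (h : TrEq J u v) : TrEq J (c :: u) (c :: v) := by
  induction h with
  | swap x y hab => exact TrEq.swap (c :: x) y hab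
  | refl u => exact TrEq.refl _
  | symm _ ih => exact ih.symm
  | trans _ _ ih1 ih2 => exact ih1.trans ih2

private lemma treq_bubble (hTF : I true false) :
    ∀ p t, TrEq I (true :: (List.replicate p false ++ t)) (List.replicate p false ++ true :: t) := by
  intro p
  induction p with
  | zero => intro t; exact TrEq.refl _
  | succ p ih =>
    intro t
    have h1 : TrEq I (true :: false :: (List.replicate p false ++ t))
        (false :: true :: (List.replicate p false ++ t)) := TrEq.swap [] _ hTF
    have h2 := treq_cons' false (ih t)
    simpa [List.replicate_succ] using h1.trans h2

private lemma treq_norm (hTF : I true false) :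
    ∀ w : List Bool,
      TrEq I w (List.replicate (w.count false) false ++ List.replicate (w.count true) true) := by
  intro w
  induction w with
  | nil => simp; exact TrEq.refl _
  | cons c w ih =>
    cases c with
    | false =>
      have := treq_cons' false ih
      simpa [List.count_cons, List.replicate_succ] using this
    | true =>
      have h1 := treq_cons' true ih
      have h2 := treq_bubble hTF (w.count false) (List.replicate (w.count true) true)
      have := h1.trans h2
      simpa [List.count_cons, List.replicate_succ] using this

private lemma treq_of_counts (hTF : I true false) {w z : List Bool}
    (h0 : w.count false = z.count false) (h1 : w.count true = z.count true) : TrEq I w z := by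
  refine (treq_norm hTF w).trans ?_
  rw [h0, h1]
  exact (treq_norm hTF z).symm

private lemma count_flatten_rep (c : Bool) (m : ℕ) (l : List Bool) :
    ((List.replicate m l).flatten).count c = m * l.count c := by
  induction m with
  | zero => simp
  | succ m ih => simp [List.replicate_succ, ih]; ring

private lemma flatten_rep_singleton {β : Type u} (m : ℕ) (c : β) :
    (List.replicate m [c]).flatten = List.replicate m c := by
  induction m with
  | zero => simp
  | succ m ih => simp [List.replicate_succ, ih]

private lemma sum_map_add' (l : List ℕ) (f g : ℕ → ℕ) :
    (l.map (fun i => f i + g i)).sum = (l.map f).sum + (l.map g).sum := by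
  induction l with
  | nil => simp
  | cons x l ih => simp [ih]; omega

private lemma infix_flatten' {β : Type u} {l : List β} {L : List (List β)} (h : l ∈ L) :
    l <:+: L.flatten := by
  obtain ⟨s, t, rfl⟩ := List.append_of_mem h
  exact ⟨s.flatten, t.flatten, by simp⟩

private lemma noFF : ∀ m : ℕ, ¬ ([false, false] <:+: (List.replicate m [false, true]).flatten) := by
  intro m
  induction m with
  | zero => simp
  | succ m ih =>
    rintro ⟨s, t, hst⟩
    rw [List.replicate_succ] at hst
    simp only [List.flatten_cons] at hst
    match s, hst with
    | [], h => simp at h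
    | [x], h => simp at h
    | x :: y :: s', h =>
      refine ih ⟨s', t, ?_⟩
      simpa using congrArg (List.drop 2) h

end Helpers12

set_option maxRecDepth 8000 in
/-- over Σ = {a, b} with a I b, L = ⟦(ab)✶(a✶ + b✶)⟧ has trace closure Σ*
(hence regular) but has no rank. -/
theorem stmt12 (I : Bool → Bool → Prop) (hI : ∀ x y, I x y ↔ x ≠ y)
    (E : RegularExpression Bool)
    (hE : E = comp (RegularExpression.star (comp (char false) (char true)))
        (plus (RegularExpression.star (char false)) (RegularExpression.star (char true)))) :
    TrClosure I E.matches' = Set.univ ∧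
    Language.IsRegular (TrClosure I E.matches' : Language Bool) ∧
    ∀ N : ℕ, ¬ HasRankLe I E.matches' N := by
  have hTF : I true false := (hI true false).mpr (by simp)
  -- membership of normal forms in L
  have memE : ∀ k r : ℕ, ∀ c : Bool,
      (List.replicate k [false, true]).flatten ++ List.replicate r c ∈ E.matches' := by
    intro k r c
    rw [hE]
    refine Language.mem_mul.mpr ⟨(List.replicate k [false, true]).flatten, ?_,
      List.replicate r c, ?_, rfl⟩
    · refine Language.join_mem_kstar fun y hy => ?_
      rw [List.eq_of_mem_replicate hy]
      exact Language.mem_mul.mpr ⟨[false], rfl, [true], rfl, rfl⟩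
    · have hmem : ∀ d : Bool, List.replicate r d ∈
          (RegularExpression.star (char d) : RegularExpression Bool).matches' := by
        intro d
        rw [← flatten_rep_singleton r d]
        exact Language.join_mem_kstar fun y hy => by rw [List.eq_of_mem_replicate hy]; rfl
      cases c with
      | false => exact Or.inl (hmem false)
      | true => exact Or.inr (hmem true)
  have h1 : TrClosure I E.matches' = Set.univ := by
    apply Set.eq_univ_iff_forall.mpr
    intro w
    rcases le_total (w.count true) (w.count false) with h | h
    · refine ⟨(List.replicate (w.count true) [false, true]).flatten ++
        List.replicate (w.count false - w.count true) false, memE _ _ _, ?_⟩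
      apply treq_of_counts hTF <;>
        simp [List.count_append, count_flatten_rep, List.count_replicate] <;> omega
    · refine ⟨(List.replicate (w.count false) [false, true]).flatten ++
        List.replicate (w.count true - w.count false) true, memE _ _ _, ?_⟩
      apply treq_of_counts hTF <;>
        simp [List.count_append, count_flatten_rep, List.count_replicate] <;> omega
  refine ⟨h1, ?_, ?_⟩
  · refine ⟨Unit, inferInstance, ⟨fun _ _ => (), (), Set.univ⟩, ?_⟩
    rw [h1]
    ext x
    simp only [DFA.mem_accepts]
    constructor <;> intro <;> exact Set.mem_univ _
  · intro N hR
    obtain ⟨M, hM⟩ : ∃ M : ℕ, M = N + 1 := ⟨N + 1, rfl⟩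
    obtain ⟨z, hz, u', v', huu', ⟨n, hn, hscat⟩, hv'v⟩ :=
      hR (List.replicate M false) (List.replicate M true) (by rw [h1]; trivial)
    have hu' : u' = List.replicate M false := List.perm_replicate.mp (treq_perm' huu').symm
    have hv' : v' = List.replicate M true := List.perm_replicate.mp (treq_perm' hv'v)
    obtain ⟨us, vs, husne, hvsne, hueq, hveq, hzeq, hind⟩ := hscat
    rw [hu'] at hueq
    rw [hv'] at hveq
    -- sum of block lengths is M
    have hlen : ((List.range n).map (fun i => (us (i + 1)).length)).sum = M := by
      have := congrArg List.length hueq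
      simpa [List.length_flatten, List.map_map, Function.comp_def] using this.symm
    -- pigeonhole: some block has length ≥ 2
    obtain ⟨i, hin, hi2⟩ : ∃ i < n, 2 ≤ (us (i + 1)).length := by
      by_contra hno
      push_neg at hno
      have hle : ((List.range n).map (fun i => (us (i + 1)).length)).sum ≤
          ((List.range n).map (fun i => (us (i + 1)).length)).length • 1 := by
        refine List.sum_le_card_nsmul _ 1 ?_
        intro x hx
        simp only [List.mem_map, List.mem_range] at hx
        obtain ⟨j, hj, rfl⟩ := hx
        have := hno j hj
        omega
      simp only [List.length_map, List.length_range, smul_eq_mul, mul_one] at hle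
      omega
    -- that block is all false
    have hall : ∀ x ∈ us (i + 1), x = false := by
      intro x hx
      have hmem : x ∈ ((List.range n).map (fun i => us (i + 1))).flatten :=
        List.mem_flatten.mpr ⟨us (i + 1), List.mem_map.mpr ⟨i, List.mem_range.mpr hin, rfl⟩, hx⟩
      rw [← hueq] at hmem
      exact List.eq_of_mem_replicate hmem
    have husrep : us (i + 1) = List.replicate (us (i + 1)).length false :=
      List.eq_replicate_of_mem hall
    have hFFus : [false, false] <:+: us (i + 1) := by
      obtain ⟨l, hl⟩ : ∃ l, (us (i + 1)).length = l + 2 := ⟨(us (i + 1)).length - 2, by omega⟩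
      refine ⟨[], List.replicate l false, ?_⟩
      rw [husrep, hl]
      simp [List.replicate_succ]
    have hFFz : [false, false] <:+: z := by
      refine hFFus.trans ?_
      rw [hzeq]
      have hmem2 : us (i + 1) ++ vs (i + 1) ∈
          (List.range n).map (fun j => us (j + 1) ++ vs (j + 1)) :=
        List.mem_map.mpr ⟨i, List.mem_range.mpr hin, rfl⟩
      refine (((List.prefix_append (us (i + 1)) (vs (i + 1))).isInfix.trans
        (infix_flatten' hmem2)).trans ?_)
      exact (List.suffix_append _ _).isInfix
    -- counts of z
    have hcz : ∀ c : Bool, z.count c =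
        (List.replicate M false).count c + (List.replicate M true).count c := by
      intro c
      have hA : (List.replicate M false).count c =
          ((List.range n).map (fun i => (us (i + 1)).count c)).sum := by
        rw [hueq]
        simp [List.count_flatten, List.map_map, Function.comp_def]
      have hB : (List.replicate M true).count c = (vs 0).count c +
          ((List.range n).map (fun i => (vs (i + 1)).count c)).sum := by
        rw [hveq, List.range_succ_eq_map]
        simp [List.count_flatten, List.map_map, Function.comp_def, Nat.succ_eq_add_one]
      rw [hzeq, hA, hB]
      simp only [List.count_append, List.count_flatten, List.map_map, Function.comp_def]
      rw [show ((List.range n).map fun i => ((us (i + 1)).count c + (vs (i + 1)).count c)).sum =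
          ((List.range n).map fun i => (us (i + 1)).count c).sum +
          ((List.range n).map fun i => (vs (i + 1)).count c).sum from
        sum_map_add' _ _ _]
      omega
    have hzF : z.count false = M := by
      have := hcz false
      simpa [List.count_replicate] using this
    have hzT : z.count true = M := by
      have := hcz true
      simpa [List.count_replicate] using this
    -- structure of z from membership in L
    rw [hE] at hz
    obtain ⟨x, hx, y, hy, hxy⟩ := Language.mem_mul.mp hz
    obtain ⟨S, rfl, hS⟩ := Language.mem_kstar.mp hx
    have hSrep : S = List.replicate S.length [false, true] := by
      refine List.eq_replicate_of_mem fun s hs => ?_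
      obtain ⟨a, ha, b, hb, hab⟩ := Language.mem_mul.mp (hS s hs)
      have ha' : a = [false] := ha
      have hb' : b = [true] := hb
      rw [← hab, ha', hb']
      rfl
    have hy' : y ∈ (RegularExpression.star (char false) : RegularExpression Bool).matches' ∨
        y ∈ (RegularExpression.star (char true) : RegularExpression Bool).matches' := hy
    have hcx : ∀ c : Bool, S.flatten.count c = S.length := by
      intro c
      rw [hSrep, count_flatten_rep]
      cases c <;> simp
    rcases hy' with hyF | hyT
    · obtain ⟨S', rfl, hS'⟩ := Language.mem_kstar.mp hyF
      have hS'rep : S' = List.replicate S'.length [false] :=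
        List.eq_replicate_of_mem fun s hs => hS' s hs
      have hyrep : S'.flatten = List.replicate S'.length false := by
        rw [hS'rep, flatten_rep_singleton]
        simp
      have hF := hzF
      have hT := hzT
      rw [← hxy] at hF hT
      rw [List.count_append, hcx, hyrep, List.count_replicate] at hF hT
      simp at hF hT
      have hSl : S.length = M := by omega
      have hS'0 : S'.length = 0 := by omega
      have hzform : z = (List.replicate M [false, true]).flatten := by
        rw [← hxy, hyrep, hS'0]
        simp only [List.replicate_zero, List.append_nil]
        rw [← hSl, ← hSrep]
      exact noFF M (hzform ▸ hFFz)
    · obtain ⟨S', rfl, hS'⟩ := Language.mem_kstar.mp hyT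
      have hS'rep : S' = List.replicate S'.length [true] :=
        List.eq_replicate_of_mem fun s hs => hS' s hs
      have hyrep : S'.flatten = List.replicate S'.length true := by
        rw [hS'rep, flatten_rep_singleton]
        simp
      have hF := hzF
      have hT := hzT
      rw [← hxy] at hF hT
      rw [List.count_append, hcx, hyrep, List.count_replicate] at hF hT
      simp at hF hT
      have hSl : S.length = M := by omega
      have hS'0 : S'.length = 0 := by omega
      have hzform : z = (List.replicate M [false, true]).flatten := by
        rw [← hxy, hyrep, hS'0]
        simp only [List.replicate_zero, List.append_nil]
        rw [← hSl, ← hSrep]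
      exact noFF M (hzform ▸ hFFz)
end

section
/- Let Σ = {a, b, c} with independence relation given exactly by a I b (and b I a), and let E = a✶b✶c(ab)✶(a✶ + b✶) + (ab)✶(a✶ + b✶)ca✶b✶. Then the language ⟦E⟧ has rank at most 2. -/
open RegularExpression
open scoped Classical

universe u

variable {α : Type u}

/- ===== auxiliary lemmas for stmt13 ===== -/

section Stmt13Aux

variable {I : α → α → Prop}

theorem treq_count [DecidableEq α] {u v : List α} (h : TrEq I u v) (x : α) : u.count x = v.count x := by
  induction h with
  | swap l r hab => simp [List.count_append, List.count_cons]; ring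
  | refl u => rfl
  | symm _ ih => exact ih.symm
  | trans _ _ ih1 ih2 => exact ih1.trans ih2

theorem treq_cons (a : α) {u v : List α} (h : TrEq I u v) : TrEq I (a :: u) (a :: v) := by
  induction h with
  | swap l r hab => exact TrEq.swap (a :: l) r hab
  | refl u => exact TrEq.refl _
  | symm _ ih => exact ih.symm
  | trans _ _ ih1 ih2 => exact ih1.trans ih2

theorem treq_append_left (u : List α) {v v' : List α} (h : TrEq I v v') :
    TrEq I (u ++ v) (u ++ v') := by
  induction u with
  | nil => exact h
  | cons a u ih => exact treq_cons a ih

theorem treq_append_right {u u' : List α} (h : TrEq I u u') (v : List α) :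
    TrEq I (u ++ v) (u' ++ v) := by
  induction h with
  | swap l r hab =>
      have := TrEq.swap (I := I) l (r ++ v) hab
      simpa [List.append_assoc] using this
  | refl u => exact TrEq.refl _
  | symm _ ih => exact ih.symm
  | trans _ _ ih1 ih2 => exact ih1.trans ih2

theorem treq_append {u u' v v' : List α} (h1 : TrEq I u u') (h2 : TrEq I v v') :
    TrEq I (u ++ v) (u' ++ v') :=
  (treq_append_right h1 v).trans (treq_append_left u' h2)

theorem treq_bubble_s13 {b : α} (l t : List α) (h : ∀ x ∈ l, I x b) :
    TrEq I (l ++ b :: t) (b :: (l ++ t)) := by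
  induction l with
  | nil => exact TrEq.refl _
  | cons a l ih =>
      have h1 : TrEq I (a :: (l ++ b :: t)) (a :: b :: (l ++ t)) :=
        treq_cons a (ih (fun x hx => h x (List.mem_cons_of_mem a hx)))
      have h2 : TrEq I ([] ++ [a, b] ++ (l ++ t)) ([] ++ [b, a] ++ (l ++ t)) :=
        TrEq.swap [] (l ++ t) (h a (List.mem_cons_self))
      exact h1.trans (by simpa using h2)

theorem scatN_zero (z : List α) : ScatN I 0 [] z z := by
  refine ⟨fun _ => [], fun _ => z, ?_, ?_, ?_, ?_, ?_, ?_⟩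
  · intro i h1 h2; omega
  · intro j h1 h2; omega
  · simp
  · simp
  · simp
  · intro i j h1 h2 hj; omega

theorem scatN_one {u' v0 v1 : List α} (hu : u' ≠ []) (hind : WIndep I v0 u') :
    ScatN I 1 u' (v0 ++ u' ++ v1) (v0 ++ v1) := by
  refine ⟨fun _ => u', fun j => if j = 0 then v0 else v1, ?_, ?_, ?_, ?_, ?_, ?_⟩
  · intro i _ _; exact hu
  · intro j h1 h2; omega
  · simp
  · have : List.range 2 = [0, 1] := rfl
    simp [this]
  · simp [List.append_assoc]
  · intro i j h1 h2 hj
    have : j = 0 := by omega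
    subst this
    simpa using hind

theorem scatN_two {u1 u2 v0 v1 v2 : List α} (hu1 : u1 ≠ []) (hu2 : u2 ≠ []) (hv1 : v1 ≠ [])
    (h01 : WIndep I v0 u1) (h02 : WIndep I v0 u2) (h12 : WIndep I v1 u2) :
    ScatN I 2 (u1 ++ u2) (v0 ++ u1 ++ v1 ++ u2 ++ v2) (v0 ++ v1 ++ v2) := by
  refine ⟨fun i => if i = 1 then u1 else u2,
      fun j => if j = 0 then v0 else if j = 1 then v1 else v2, ?_, ?_, ?_, ?_, ?_, ?_⟩
  · intro i h1 h2
    by_cases h : i = 1 <;> simp [h, hu1, hu2]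
  · intro j h1 h2
    have : j = 1 := by omega
    simp [this, hv1]
  · have : List.range 2 = [0, 1] := rfl
    simp [this]
  · have : List.range 3 = [0, 1, 2] := rfl
    simp [this, List.append_assoc]
  · have : List.range 2 = [0, 1] := rfl
    simp [this, List.append_assoc]
  · intro i j h1 h2 hj
    interval_cases i
    · have : j = 0 := by omega
      subst this; simpa using h01
    · interval_cases j
      · simpa using h02
      · simpa using h12

end Stmt13Aux

section Stmt13Fin

/-- the alternating pattern followed by the leftover letters -/
def pat13 (t w : ℕ) : List (Fin 3) :=
  if w ≤ t then (List.replicate w ([0, 1] : List (Fin 3))).flatten ++ List.replicate (t - w) 0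
  else (List.replicate t ([0, 1] : List (Fin 3))).flatten ++ List.replicate (w - t) 1

theorem count_flat13 (k : ℕ) (x : Fin 3) :
    ((List.replicate k ([0, 1] : List (Fin 3))).flatten).count x
      = k * (([0, 1] : List (Fin 3)).count x) := by
  induction k with
  | zero => simp
  | succ k ih => simp [List.replicate_succ, List.count_append, List.count_cons, ih]; ring

theorem mem_flat13 (l : List (Fin 3)) (k : ℕ)
    (hl : l = (List.replicate k ([0, 1] : List (Fin 3))).flatten) :
    ∀ x ∈ l, x = 0 ∨ x = 1 := by
  subst hl
  intro x hx
  rw [List.mem_flatten] at hx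
  obtain ⟨m, hm, hxm⟩ := hx
  rw [List.eq_of_mem_replicate hm] at hxm
  simpa using hxm

theorem pat13_count0 (t w : ℕ) : (pat13 t w).count 0 = t := by
  unfold pat13
  split <;> simp [List.count_append, count_flat13, List.count_replicate] <;> omega

theorem pat13_count1 (t w : ℕ) : (pat13 t w).count 1 = w := by
  unfold pat13
  split <;> simp [List.count_append, count_flat13, List.count_replicate] <;> omega

theorem pat13_mem (t w : ℕ) : ∀ x ∈ pat13 t w, x = 0 ∨ x = 1 := by
  unfold pat13
  split <;>
  · intro x hx
    rw [List.mem_append] at hx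
    rcases hx with hx | hx
    · exact mem_flat13 _ _ rfl x hx
    · rw [List.eq_of_mem_replicate hx]; simp

variable {I : Fin 3 → Fin 3 → Prop}

theorem treq_sort (h01 : I 0 1) {w : List (Fin 3)} (hw : ∀ x ∈ w, x = 0 ∨ x = 1) :
    TrEq I w (List.replicate (w.count 0) 0 ++ List.replicate (w.count 1) 1) := by
  induction w with
  | nil => simpa using TrEq.refl ([] : List (Fin 3))
  | cons a w ih =>
      have hw' : ∀ x ∈ w, x = 0 ∨ x = 1 := fun x hx => hw x (List.mem_cons_of_mem a hx)
      have h1 := treq_cons (I := I) a (ih hw')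
      rcases hw a (List.mem_cons_self) with ha | ha
      · subst ha
        have e0 : ((0 : Fin 3) :: w).count 0 = w.count 0 + 1 := by simp [List.count_cons]
        have e1 : ((0 : Fin 3) :: w).count 1 = w.count 1 := by simp [List.count_cons]
        rw [e0, e1, List.replicate_succ]
        exact h1
      · subst ha
        have e0 : ((1 : Fin 3) :: w).count 0 = w.count 0 := by simp [List.count_cons]
        have e1 : ((1 : Fin 3) :: w).count 1 = w.count 1 + 1 := by simp [List.count_cons]
        rw [e0, e1, List.replicate_succ]
        have h2 : TrEq I (List.replicate (w.count 0) 0 ++ 1 :: List.replicate (w.count 1) 1)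
            (1 :: (List.replicate (w.count 0) 0 ++ List.replicate (w.count 1) 1)) :=
          treq_bubble_s13 _ _ (by
            intro x hx
            rw [List.eq_of_mem_replicate hx]
            exact h01)
        exact h1.trans h2.symm

theorem treq_of_counts_s13 (h01 : I 0 1) {w w' : List (Fin 3)}
    (hw : ∀ x ∈ w, x = 0 ∨ x = 1) (hw' : ∀ x ∈ w', x = 0 ∨ x = 1)
    (h0 : w.count 0 = w'.count 0) (h1 : w.count 1 = w'.count 1) : TrEq I w w' := by
  have t1 := treq_sort (I := I) h01 hw
  have t2 := treq_sort (I := I) h01 hw'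
  rw [h0, h1] at t1
  exact t1.trans t2.symm

theorem windep_rep (h01 : I 0 1) (r q : ℕ) :
    WIndep I (List.replicate r (0 : Fin 3)) (List.replicate q (1 : Fin 3)) := by
  intro a ha b hb
  rw [List.eq_of_mem_replicate ha, List.eq_of_mem_replicate hb]
  exact h01

theorem windep_nil (u : List (Fin 3)) : WIndep I ([] : List (Fin 3)) u := by
  intro a ha; simp at ha

/- membership lemmas -/

theorem rep_mem_star_char (a : Fin 3) (n : ℕ) :
    List.replicate n a ∈ (RegularExpression.star (char a)).matches' := by
  rw [RegularExpression.matches'_star]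
  refine ⟨List.replicate n [a], ?_, ?_⟩
  · induction n with
    | zero => rfl
    | succ n ih =>
        rw [List.replicate_succ, List.replicate_succ, List.flatten_cons, ← ih]
        rfl
  · intro y hy
    rw [List.eq_of_mem_replicate hy, RegularExpression.matches'_char]
    rfl

theorem flat13_mem_star (k : ℕ) :
    (List.replicate k ([0, 1] : List (Fin 3))).flatten
      ∈ (RegularExpression.star (comp (char 0) (char 1))).matches' := by
  rw [RegularExpression.matches'_star]
  refine Language.join_mem_kstar ?_
  intro y hy
  rw [List.eq_of_mem_replicate hy, RegularExpression.comp_def, RegularExpression.matches'_mul]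
  exact ⟨[0], by rw [RegularExpression.matches'_char]; rfl, [1],
    by rw [RegularExpression.matches'_char]; rfl, rfl⟩

theorem pat13_mem_lang (t w : ℕ) :
    pat13 t w ∈ (comp (RegularExpression.star (comp (char 0) (char 1)))
      (plus (RegularExpression.star (char 0 : RegularExpression (Fin 3)))
        (RegularExpression.star (char 1)))).matches' := by
  rw [RegularExpression.comp_def, RegularExpression.matches'_mul]
  unfold pat13
  split
  · exact ⟨_, flat13_mem_star w, _, Or.inl (rep_mem_star_char 0 (t - w)), rfl⟩
  · exact ⟨_, flat13_mem_star t, _, Or.inr (rep_mem_star_char 1 (w - t)), rfl⟩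

/- every word of the language has exactly one letter 2 -/

theorem count_kstar_zero {l : Language (Fin 3)} {x : Fin 3} (h : ∀ w ∈ l, w.count x = 0)
    {w : List (Fin 3)} (hw : w ∈ KStar.kstar l) : w.count x = 0 := by
  obtain ⟨L, rfl, hL⟩ := hw
  induction L with
  | nil => simp
  | cons y L ih =>
      simp only [List.flatten_cons, List.count_append]
      rw [h y (hL y (by simp)), ih (fun z hz => hL z (by simp [hz]))]

end Stmt13Fin

section Stmt13More

theorem windep_nil' {α : Type u} {I : α → α → Prop} (u : List α) : WIndep I ([] : List α) u := by
  intro a ha; simp at ha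

theorem scatN_one' {α : Type u} {I : α → α → Prop} {u' v1 : List α} (hu : u' ≠ []) :
    ScatN I 1 u' (u' ++ v1) v1 := by
  simpa using scatN_one (I := I) hu (windep_nil' u')

variable {I : Fin 3 → Fin 3 → Prop}

theorem count2_star_char (a : Fin 3) (ha : a ≠ 2) :
    ∀ w ∈ (RegularExpression.star (char a)).matches', w.count 2 = 0 := by
  intro w hw
  rw [RegularExpression.matches'_star] at hw
  refine count_kstar_zero ?_ hw
  intro y hy
  rw [RegularExpression.matches'_char] at hy
  replace hy : y = [a] := hy
  subst hy
  simp [List.count_cons, ha, Ne.symm ha]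

theorem count2_star_ab :
    ∀ w ∈ (RegularExpression.star (comp (char (0 : Fin 3)) (char 1))).matches', w.count 2 = 0 := by
  intro w hw
  rw [RegularExpression.matches'_star] at hw
  refine count_kstar_zero ?_ hw
  intro y hy
  rw [RegularExpression.comp_def, RegularExpression.matches'_mul] at hy
  obtain ⟨a, ha, b, hb, rfl⟩ := Language.mem_mul.1 hy
  rw [RegularExpression.matches'_char] at ha hb
  replace ha : a = [0] := ha
  replace hb : b = [1] := hb
  subst ha; subst hb; decide

theorem count2_plus01 :
    ∀ w ∈ (plus (RegularExpression.star (char (0 : Fin 3)))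
        (RegularExpression.star (char 1))).matches', w.count 2 = 0 := by
  intro w hw
  rcases hw with hw | hw
  · exact count2_star_char 0 (by decide) _ hw
  · exact count2_star_char 1 (by decide) _ hw

theorem split_at_two {w : List (Fin 3)} (h : w.count 2 = 1) :
    ∃ x y, w = x ++ 2 :: y ∧ x.count 2 = 0 ∧ y.count 2 = 0 := by
  have hmem : (2 : Fin 3) ∈ w := by
    rw [← List.count_pos_iff]; omega
  obtain ⟨x, y, rfl⟩ := List.append_of_mem hmem
  rw [List.count_append, List.count_cons_self] at h
  exact ⟨x, y, rfl, by omega, by omega⟩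

theorem count_pos3 {u : List (Fin 3)} (h : u ≠ []) (hfree : ∀ x ∈ u, x = 0 ∨ x = 1) :
    0 < u.count 0 + u.count 1 := by
  rcases u with _ | ⟨a, u⟩
  · exact absurd rfl h
  · rcases hfree a (List.mem_cons_self) with h | h <;> subst h
    · have : (0 : Fin 3) ∈ 0 :: u := List.mem_cons_self
      have := List.count_pos_iff.2 this
      omega
    · have : (1 : Fin 3) ∈ 1 :: u := List.mem_cons_self
      have := List.count_pos_iff.2 this
      omega

theorem count_rep01 (r s : ℕ) :
    (List.replicate r (0 : Fin 3) ++ List.replicate s 1).count 0 = r ∧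
    (List.replicate r (0 : Fin 3) ++ List.replicate s 1).count 1 = s := by
  constructor <;> simp [List.count_append, List.count_replicate]

theorem mem_rep01 (r s : ℕ) :
    ∀ x ∈ List.replicate r (0 : Fin 3) ++ List.replicate s 1, x = 0 ∨ x = 1 := by
  intro x hx
  rcases List.mem_append.1 hx with h | h
  · left; exact List.eq_of_mem_replicate h
  · right; exact List.eq_of_mem_replicate h

theorem treq_vprime (h01 : I 0 1) {x y : List (Fin 3)}
    (hx : ∀ a ∈ x, a = 0 ∨ a = 1) (hy : ∀ a ∈ y, a = 0 ∨ a = 1) :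
    TrEq I (List.replicate (x.count 0) 0 ++ List.replicate (x.count 1) 1
      ++ 2 :: pat13 (y.count 0) (y.count 1)) (x ++ 2 :: y) := by
  have hx' := treq_sort (I := I) h01 hx
  have hy' : TrEq I (pat13 (y.count 0) (y.count 1)) y :=
    treq_of_counts_s13 h01 (pat13_mem _ _) hy (pat13_count0 _ _) (pat13_count1 _ _)
  exact treq_append (I := I) hx'.symm (treq_cons 2 hy')

theorem treq_uprime (h01 : I 0 1) {x y : List (Fin 3)}
    (hx : ∀ a ∈ x, a = 0 ∨ a = 1) (hy : ∀ a ∈ y, a = 0 ∨ a = 1) :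
    TrEq I (x ++ 2 :: y) (pat13 (x.count 0) (x.count 1)
      ++ 2 :: (List.replicate (y.count 0) 0 ++ List.replicate (y.count 1) 1)) := by
  have hx' : TrEq I x (pat13 (x.count 0) (x.count 1)) :=
    (treq_of_counts_s13 h01 (pat13_mem _ _) hx (pat13_count0 _ _) (pat13_count1 _ _)).symm
  exact treq_append (I := I) hx' (treq_cons 2 (treq_sort h01 hy))

theorem mem_L1_13 (p q t w : ℕ) :
    (List.replicate p (0 : Fin 3) ++ List.replicate q 1 ++ 2 :: pat13 t w) ∈
      (comp (comp (comp (comp (RegularExpression.star (char 0)) (RegularExpression.star (char 1)))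
          (char 2)) (RegularExpression.star (comp (char 0) (char 1))))
        (plus (RegularExpression.star (char 0)) (RegularExpression.star (char 1)))).matches' := by
  have h := pat13_mem_lang t w
  rw [RegularExpression.comp_def, RegularExpression.matches'_mul] at h
  obtain ⟨Y1, hY1, Y2, hY2, hY⟩ := Language.mem_mul.1 h
  refine Language.mem_mul.2 ⟨(List.replicate p 0 ++ List.replicate q 1 ++ [2]) ++ Y1, ?_, Y2, hY2, ?_⟩
  · refine Language.mem_mul.2 ⟨_, ?_, Y1, hY1, rfl⟩
    refine Language.mem_mul.2 ⟨_, ?_, [2], rfl, rfl⟩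
    exact Language.mem_mul.2 ⟨_, rep_mem_star_char 0 p, _, rep_mem_star_char 1 q, rfl⟩
  · rw [← hY]; simp [List.append_assoc]

theorem mem_L2_13 (r s p q : ℕ) :
    (pat13 r s ++ 2 :: (List.replicate p (0 : Fin 3) ++ List.replicate q 1)) ∈
      (comp (comp (comp (RegularExpression.star (comp (char 0) (char 1)))
          (plus (RegularExpression.star (char 0)) (RegularExpression.star (char 1)))) (char 2))
        (comp (RegularExpression.star (char 0)) (RegularExpression.star (char 1)))).matches' := by
  have h := pat13_mem_lang r s
  rw [RegularExpression.comp_def, RegularExpression.matches'_mul] at h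
  obtain ⟨Y1, hY1, Y2, hY2, hY⟩ := Language.mem_mul.1 h
  refine Language.mem_mul.2 ⟨(Y1 ++ Y2) ++ [2], ?_,
    List.replicate p 0 ++ List.replicate q 1, ?_, ?_⟩
  · refine Language.mem_mul.2 ⟨Y1 ++ Y2, ?_, [2], rfl, rfl⟩
    exact Language.mem_mul.2 ⟨Y1, hY1, Y2, hY2, rfl⟩
  · exact Language.mem_mul.2 ⟨_, rep_mem_star_char 0 p, _, rep_mem_star_char 1 q, rfl⟩
  · rw [← hY]; simp [List.append_assoc]

end Stmt13More

/-- over Σ = {a, b, c} with independence exactly a I b,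
E = a✶b✶c(ab)✶(a✶ + b✶) + (ab)✶(a✶ + b✶)ca✶b✶ has rank at most 2. -/
theorem stmt13 (I : Fin 3 → Fin 3 → Prop)
    (hI : ∀ x y, I x y ↔ ((x = 0 ∧ y = 1) ∨ (x = 1 ∧ y = 0)))
    (A B C : RegularExpression (Fin 3))
    (hA : A = char 0) (hB : B = char 1) (hC : C = char 2)
    (E : RegularExpression (Fin 3))
    (hE : E = plus
      (comp (comp (comp (comp (RegularExpression.star A) (RegularExpression.star B)) C)
          (RegularExpression.star (comp A B)))
        (plus (RegularExpression.star A) (RegularExpression.star B)))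
      (comp (comp (comp (RegularExpression.star (comp A B))
          (plus (RegularExpression.star A) (RegularExpression.star B))) C)
        (comp (RegularExpression.star A) (RegularExpression.star B)))) :
    HasRankLe I E.matches' 2 := by
  have h01 : I 0 1 := (hI 0 1).2 (Or.inl ⟨rfl, rfl⟩)
  subst hA; subst hB; subst hC; subst hE
  have fin3 : ∀ a : Fin 3, a = 0 ∨ a = 1 ∨ a = 2 := by intro a; fin_cases a <;> simp
  have free : ∀ l : List (Fin 3), l.count 2 = 0 → ∀ x ∈ l, x = 0 ∨ x = 1 := by
    intro l hl x hx
    rcases fin3 x with h | h | h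
    · exact Or.inl h
    · exact Or.inr h
    · subst h; rw [List.count_eq_zero] at hl; exact absurd hx hl
  intro u v huv
  obtain ⟨z0, hz0, heq⟩ := huv
  have hz0c : z0.count 2 = 1 := by
    rcases hz0 with hz0 | hz0
    · obtain ⟨a1, ha1, b1, hb1, rfl⟩ := Language.mem_mul.1 hz0
      obtain ⟨a2, ha2, b2, hb2, rfl⟩ := Language.mem_mul.1 ha1
      obtain ⟨a3, ha3, b3, hb3, rfl⟩ := Language.mem_mul.1 ha2
      obtain ⟨a4, ha4, b4, hb4, rfl⟩ := Language.mem_mul.1 ha3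
      rw [RegularExpression.matches'_char] at hb3; replace hb3 : b3 = [2] := hb3; subst hb3
      have e1 := count2_star_char 0 (by decide) _ ha4
      have e2 := count2_star_char 1 (by decide) _ hb4
      have e3 := count2_star_ab _ hb2
      have e4 := count2_plus01 _ hb1
      simp [List.count_append, List.count_cons, e1, e2, e3, e4]
    · obtain ⟨a1, ha1, b1, hb1, rfl⟩ := Language.mem_mul.1 hz0
      obtain ⟨a2, ha2, b2, hb2, rfl⟩ := Language.mem_mul.1 ha1
      obtain ⟨a3, ha3, b3, hb3, rfl⟩ := Language.mem_mul.1 ha2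
      obtain ⟨c1, hc1, c2, hc2, rfl⟩ := Language.mem_mul.1 hb1
      rw [RegularExpression.matches'_char] at hb2; replace hb2 : b2 = [2] := hb2; subst hb2
      have e1 := count2_star_ab _ ha3
      have e2 := count2_plus01 _ hb3
      have e3 := count2_star_char 0 (by decide) _ hc1
      have e4 := count2_star_char 1 (by decide) _ hc2
      simp [List.count_append, List.count_cons, e1, e2, e3, e4]
  have hcnt : u.count 2 + v.count 2 = 1 := by
    have h : (u ++ v).count 2 = 1 := (treq_count heq 2).trans hz0c
    rwa [List.count_append] at h
  by_cases hu2 : u.count 2 = 0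
  · -- the letter 2 lies in v
    have hv2 : v.count 2 = 1 := by omega
    obtain ⟨x, y, hv, hx2, hy2⟩ := split_at_two hv2
    subst hv
    have hufree := free u hu2
    have hxfree := free x hx2
    have hyfree := free y hy2
    refine ⟨List.replicate (u.count 0 + x.count 0) 0 ++ List.replicate (u.count 1 + x.count 1) 1
        ++ 2 :: pat13 (y.count 0) (y.count 1), Or.inl (mem_L1_13 _ _ _ _), ?_⟩
    have hv' := treq_vprime (I := I) h01 hxfree hyfree
    by_cases hnil : u = []
    · subst hnil
      exact ⟨[], _, TrEq.refl [], ⟨0, by omega, by simpa using scatN_zero _⟩, by simpa using hv'⟩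
    · by_cases hq : u.count 1 = 0
      · -- u ~ 0^p, one block
        have hp : u.count 0 ≠ 0 := by have := count_pos3 hnil hufree; omega
        refine ⟨List.replicate (u.count 0) 0,
          List.replicate (x.count 0) 0 ++ List.replicate (x.count 1) 1
            ++ 2 :: pat13 (y.count 0) (y.count 1), ?_, ⟨1, by omega, ?_⟩, hv'⟩
        · have h := treq_sort (I := I) h01 hufree
          rw [hq] at h; simpa using h
        · have hs := scatN_one' (I := I) (v1 := List.replicate (x.count 0) 0
            ++ List.replicate (x.count 1) 1 ++ 2 :: pat13 (y.count 0) (y.count 1))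
            (by simp [hp] : List.replicate (u.count 0) (0 : Fin 3) ≠ [])
          have hzeq : List.replicate (u.count 0 + x.count 0) (0 : Fin 3)
              ++ List.replicate (u.count 1 + x.count 1) 1 ++ 2 :: pat13 (y.count 0) (y.count 1)
              = List.replicate (u.count 0) 0 ++ (List.replicate (x.count 0) 0
                ++ List.replicate (x.count 1) 1 ++ 2 :: pat13 (y.count 0) (y.count 1)) := by
            simp only [hq, List.replicate_add, List.append_assoc, List.replicate_zero, List.nil_append, List.append_nil, List.cons_append]
          rw [hzeq]
          exact hs
      · by_cases hp : u.count 0 = 0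
        · -- u ~ 1^q, one block, v0 = 0^r
          refine ⟨List.replicate (u.count 1) 1,
            List.replicate (x.count 0) 0 ++ (List.replicate (x.count 1) 1
              ++ 2 :: pat13 (y.count 0) (y.count 1)), ?_, ⟨1, by omega, ?_⟩, ?_⟩
          · have h := treq_sort (I := I) h01 hufree
            rw [hp] at h; simpa using h
          · have hs := scatN_one (I := I)
              (v0 := List.replicate (x.count 0) 0)
              (v1 := List.replicate (x.count 1) 1 ++ 2 :: pat13 (y.count 0) (y.count 1))
              (by simp [hq] : List.replicate (u.count 1) (1 : Fin 3) ≠ [])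
              (windep_rep h01 _ _)
            have hzeq : List.replicate (u.count 0 + x.count 0) (0 : Fin 3)
                ++ List.replicate (u.count 1 + x.count 1) 1 ++ 2 :: pat13 (y.count 0) (y.count 1)
                = List.replicate (x.count 0) 0 ++ List.replicate (u.count 1) 1
                  ++ (List.replicate (x.count 1) 1 ++ 2 :: pat13 (y.count 0) (y.count 1)) := by
              simp only [hp, List.replicate_add, List.append_assoc, List.replicate_zero, List.nil_append, List.append_nil, List.cons_append]
            rw [hzeq]
            exact hs
          · simpa [List.append_assoc] using hv'
        · by_cases hr : x.count 0 = 0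
          · -- u ~ 0^p 1^q, one block
            refine ⟨List.replicate (u.count 0) 0 ++ List.replicate (u.count 1) 1,
              List.replicate (x.count 1) 1 ++ 2 :: pat13 (y.count 0) (y.count 1),
              treq_sort h01 hufree, ⟨1, by omega, ?_⟩, ?_⟩
            · have hs := scatN_one' (I := I)
                (v1 := List.replicate (x.count 1) 1 ++ 2 :: pat13 (y.count 0) (y.count 1))
                (by simp [hp] : List.replicate (u.count 0) (0 : Fin 3)
                  ++ List.replicate (u.count 1) 1 ≠ [])
              have hzeq : List.replicate (u.count 0 + x.count 0) (0 : Fin 3)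
                  ++ List.replicate (u.count 1 + x.count 1) 1 ++ 2 :: pat13 (y.count 0) (y.count 1)
                  = List.replicate (u.count 0) 0 ++ List.replicate (u.count 1) 1
                    ++ (List.replicate (x.count 1) 1 ++ 2 :: pat13 (y.count 0) (y.count 1)) := by
                simp only [hr, List.replicate_add, List.append_assoc, List.replicate_zero, List.nil_append, List.append_nil, List.cons_append]
              rw [hzeq]
              exact hs
            · simpa [hr] using hv'
          · -- two blocks
            refine ⟨List.replicate (u.count 0) 0 ++ List.replicate (u.count 1) 1,
              [] ++ List.replicate (x.count 0) 0 ++ (List.replicate (x.count 1) 1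
                ++ 2 :: pat13 (y.count 0) (y.count 1)),
              treq_sort h01 hufree, ⟨2, by omega, ?_⟩, ?_⟩
            · have hs := scatN_two (I := I)
                (u1 := List.replicate (u.count 0) 0) (u2 := List.replicate (u.count 1) 1)
                (v0 := []) (v1 := List.replicate (x.count 0) 0)
                (v2 := List.replicate (x.count 1) 1 ++ 2 :: pat13 (y.count 0) (y.count 1))
                (by simp [hp]) (by simp [hq]) (by simp [hr])
                (windep_nil' _) (windep_nil' _) (windep_rep h01 _ _)
              have hzeq : List.replicate (u.count 0 + x.count 0) (0 : Fin 3)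
                  ++ List.replicate (u.count 1 + x.count 1) 1 ++ 2 :: pat13 (y.count 0) (y.count 1)
                  = [] ++ List.replicate (u.count 0) 0 ++ List.replicate (x.count 0) 0
                    ++ List.replicate (u.count 1) 1 ++ (List.replicate (x.count 1) 1
                      ++ 2 :: pat13 (y.count 0) (y.count 1)) := by
                simp only [List.replicate_add, List.append_assoc, List.replicate_zero, List.nil_append, List.append_nil, List.cons_append]
              rw [hzeq]
              exact hs
            · simpa [List.append_assoc] using hv'
  · -- the letter 2 lies in u
    have hu2' : u.count 2 = 1 := by omega
    have hv2 : v.count 2 = 0 := by omega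
    obtain ⟨x, y, hu, hx2, hy2⟩ := split_at_two hu2'
    subst hu
    have hxfree := free x hx2
    have hyfree := free y hy2
    have hvfree := free v hv2
    refine ⟨pat13 (x.count 0) (x.count 1) ++ 2 :: (List.replicate (y.count 0 + v.count 0) 0
        ++ List.replicate (y.count 1 + v.count 1) 1), Or.inr (mem_L2_13 _ _ _ _), ?_⟩
    have hu' := treq_uprime (I := I) h01 hxfree hyfree
    have hvs := (treq_sort (I := I) h01 hvfree).symm
    by_cases ht : v.count 0 = 0
    · -- one block: whole u', v1 = 1^w
      refine ⟨pat13 (x.count 0) (x.count 1) ++ 2 :: (List.replicate (y.count 0) 0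
          ++ List.replicate (y.count 1) 1), List.replicate (v.count 1) 1,
        hu', ⟨1, by omega, ?_⟩, by simpa [ht] using hvs⟩
      · have hs := scatN_one' (I := I) (v1 := List.replicate (v.count 1) 1)
          (by simp : pat13 (x.count 0) (x.count 1) ++ 2 :: (List.replicate (y.count 0) (0 : Fin 3)
            ++ List.replicate (y.count 1) 1) ≠ [])
        have hzeq : pat13 (x.count 0) (x.count 1) ++ 2 :: (List.replicate (y.count 0 + v.count 0)
            (0 : Fin 3) ++ List.replicate (y.count 1 + v.count 1) 1)
            = pat13 (x.count 0) (x.count 1) ++ 2 :: (List.replicate (y.count 0) 0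
              ++ List.replicate (y.count 1) 1) ++ List.replicate (v.count 1) 1 := by
          simp only [ht, List.replicate_add, List.append_assoc, List.replicate_zero, List.nil_append, List.append_nil, List.cons_append]
        rw [hzeq]
        exact hs
    · by_cases hq : y.count 1 = 0
      · -- one block: u' = pat ++ 2 :: 0^p, v1 = 0^t 1^w
        refine ⟨pat13 (x.count 0) (x.count 1) ++ 2 :: List.replicate (y.count 0) 0,
          List.replicate (v.count 0) 0 ++ List.replicate (v.count 1) 1,
          ?_, ⟨1, by omega, ?_⟩, hvs⟩
        · have := hu'
          rw [hq] at this; simpa using this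
        · have hs := scatN_one' (I := I)
            (v1 := List.replicate (v.count 0) 0 ++ List.replicate (v.count 1) 1)
            (by simp : pat13 (x.count 0) (x.count 1)
              ++ 2 :: List.replicate (y.count 0) (0 : Fin 3) ≠ [])
          have hzeq : pat13 (x.count 0) (x.count 1) ++ 2 :: (List.replicate (y.count 0 + v.count 0)
              (0 : Fin 3) ++ List.replicate (y.count 1 + v.count 1) 1)
              = pat13 (x.count 0) (x.count 1) ++ 2 :: List.replicate (y.count 0) 0
                ++ (List.replicate (v.count 0) 0 ++ List.replicate (v.count 1) 1) := by
            simp only [hq, List.replicate_add, List.append_assoc, List.replicate_zero, List.nil_append, List.append_nil, List.cons_append]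
          rw [hzeq]
          exact hs
      · -- two blocks
        refine ⟨(pat13 (x.count 0) (x.count 1) ++ 2 :: List.replicate (y.count 0) 0)
            ++ List.replicate (y.count 1) 1,
          [] ++ List.replicate (v.count 0) 0 ++ List.replicate (v.count 1) 1,
          ?_, ⟨2, by omega, ?_⟩, by simpa using hvs⟩
        · have := hu'
          have heq2 : pat13 (x.count 0) (x.count 1) ++ 2 :: (List.replicate (y.count 0) (0 : Fin 3)
              ++ List.replicate (y.count 1) 1)
              = (pat13 (x.count 0) (x.count 1) ++ 2 :: List.replicate (y.count 0) 0)
                ++ List.replicate (y.count 1) 1 := by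
            simp [List.append_assoc]
          rwa [heq2] at this
        · have hs := scatN_two (I := I)
            (u1 := pat13 (x.count 0) (x.count 1) ++ 2 :: List.replicate (y.count 0) 0)
            (u2 := List.replicate (y.count 1) 1)
            (v0 := []) (v1 := List.replicate (v.count 0) 0)
            (v2 := List.replicate (v.count 1) 1)
            (by simp) (by simp [hq]) (by simp [ht])
            (windep_nil' _) (windep_nil' _) (windep_rep h01 _ _)
          have hzeq : pat13 (x.count 0) (x.count 1) ++ 2 :: (List.replicate (y.count 0 + v.count 0)
              (0 : Fin 3) ++ List.replicate (y.count 1 + v.count 1) 1)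
              = [] ++ (pat13 (x.count 0) (x.count 1) ++ 2 :: List.replicate (y.count 0) 0)
                ++ List.replicate (v.count 0) 0 ++ List.replicate (y.count 1) 1
                ++ List.replicate (v.count 1) 1 := by
            simp only [List.replicate_add, List.append_assoc, List.replicate_zero, List.nil_append, List.append_nil, List.cons_append]
          rw [hzeq]
          exact hs
end

section
/- Let Σ = {a, b, c} with independence relation given exactly by a I b (and b I a), and let E = a✶b✶c(ab)✶(a✶ + b✶) + (ab)✶(a✶ + b✶)ca✶b✶. Then for no N ∈ ℕ does the language ⟦E⟧ have uniform rank at most N; i.e., there is a regular language that has rank but no uniform rank. -/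
open RegularExpression
open scoped Classical

universe u

variable {α : Type u}

section Helpers

lemma trEq_length {I : α → α → Prop} {u v : List α} (h : TrEq I u v) :
    u.length = v.length := by
  induction h with
  | swap x y _ => simp
  | refl => rfl
  | symm _ ih => omega
  | trans _ _ ih1 ih2 => omega

lemma trEq_filter {I : α → α → Prop} (p : α → Bool)
    (hp : ∀ a b, I a b → List.filter p [a, b] = List.filter p [b, a])
    {u v : List α} (h : TrEq I u v) : u.filter p = v.filter p := by
  induction h with
  | swap x y hab => simp only [List.filter_append]; rw [hp _ _ hab]
  | refl => rfl
  | symm _ ih => exact ih.symm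
  | trans _ _ ih1 ih2 => exact ih1.trans ih2

lemma trEq_context {I : α → α → Prop} {u v : List α} (h : TrEq I u v) (x y : List α) :
    TrEq I (x ++ u ++ y) (x ++ v ++ y) := by
  induction h with
  | swap x' y' hab =>
    have h2 := TrEq.swap (I := I) (x ++ x') (y' ++ y) hab
    simpa [List.append_assoc] using h2
  | refl => exact TrEq.refl _
  | symm _ ih => exact TrEq.symm ih
  | trans _ _ ih1 ih2 => exact TrEq.trans ih1 ih2

lemma trEq_cons {I : α → α → Prop} {u v : List α} (h : TrEq I u v) (c : α) :
    TrEq I (c :: u) (c :: v) := by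
  simpa using trEq_context h [c] []

lemma trEq_move {I : α → α → Prop} {b a : α} (hba : I b a) (M : ℕ) (r : List α) :
    TrEq I (b :: (List.replicate M a ++ r)) (List.replicate M a ++ b :: r) := by
  induction M with
  | zero => simpa using TrEq.refl (b :: r)
  | succ M ih =>
    have h1 : TrEq I (b :: a :: (List.replicate M a ++ r))
        (a :: b :: (List.replicate M a ++ r)) := by
      simpa using TrEq.swap (I := I) [] (List.replicate M a ++ r) hba
    have h2 := trEq_cons ih a
    have := h1.trans h2
    simpa [List.replicate_succ] using this

end Helpers
section Helpers2

/-- The word (ab)^k. -/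
def ABw (k : ℕ) : List (Fin 3) := (List.replicate k ([0, 1] : List (Fin 3))).flatten

lemma ABw_succ (k : ℕ) : ABw (k + 1) = 0 :: 1 :: ABw k := by
  simp [ABw, List.replicate_succ]

lemma mem_ABw {x : Fin 3} {k : ℕ} (h : x ∈ ABw k) : x = 0 ∨ x = 1 := by
  rcases List.mem_flatten.mp h with ⟨l, hl, hx⟩
  rw [List.eq_of_mem_replicate hl] at hx
  simpa using hx

lemma chain'_cons_ABw (k : ℕ) : List.Chain' (· ≠ ·) ((1 : Fin 3) :: ABw k) := by
  induction k with
  | zero => simp [ABw]; exact List.isChain_singleton _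
  | succ k ih =>
    rw [ABw_succ]
    refine List.isChain_cons_cons.mpr ⟨by decide, List.isChain_cons_cons.mpr ⟨by decide, ih⟩⟩

lemma chain'_ABw (k : ℕ) : List.Chain' (· ≠ ·) (ABw k) := by
  cases k with
  | zero => simp [ABw]; exact List.isChain_nil
  | succ k =>
    rw [ABw_succ]
    exact List.isChain_cons_cons.mpr ⟨by decide, chain'_cons_ABw k⟩

lemma infix_ABw_short {l : List (Fin 3)} {x : Fin 3} {k : ℕ}
    (hl : ∀ y ∈ l, y = x) (h : l <:+: ABw k) : l.length ≤ 1 := by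
  by_contra hlen
  push_neg at hlen
  match l, hlen with
  | y :: z :: t, _ =>
    have hch := (chain'_ABw k).infix h
    have hy := hl y (by simp)
    have hz := hl z (by simp)
    exact (List.isChain_cons_cons.mp hch).1 (by rw [hy, hz])

lemma rep_two_eq {d : Fin 3} (hd : d ≠ 2) : ∀ (p : ℕ) {p' : ℕ} {X Y : List (Fin 3)},
    List.replicate p d ++ 2 :: X = List.replicate p' d ++ 2 :: Y → p = p' ∧ X = Y := by
  intro p
  induction p with
  | zero =>
    intro p' X Y h
    cases p' with
    | zero => simpa using h
    | succ p' =>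
      rw [List.replicate_succ] at h
      simp only [List.replicate_zero, List.nil_append, List.cons_append,
        List.cons.injEq] at h
      exact absurd h.1.symm hd
  | succ p ih =>
    intro p' X Y h
    cases p' with
    | zero =>
      rw [List.replicate_succ] at h
      simp only [List.replicate_zero, List.nil_append, List.cons_append,
        List.cons.injEq] at h
      exact absurd h.1 hd
    | succ p' =>
      rw [List.replicate_succ, List.replicate_succ] at h
      simp only [List.cons_append, List.cons.injEq] at h
      obtain ⟨h1, h2⟩ := ih h.2
      exact ⟨by omega, h2⟩

/-- Boolean predicate "is not 1". -/
def q1 : Fin 3 → Bool := fun x => decide (x ≠ 1)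

/-- Boolean predicate "is not 0". -/
def q0 : Fin 3 → Bool := fun x => decide (x ≠ 0)

lemma filter_ne1_ABw (k : ℕ) :
    (ABw k).filter q1 = List.replicate k (0 : Fin 3) := by
  induction k with
  | zero => simp [ABw]
  | succ k ih =>
    rw [ABw_succ, List.replicate_succ,
      List.filter_cons_of_pos (by decide), List.filter_cons_of_neg (by decide), ih]

lemma filter_ne0_ABw (k : ℕ) :
    (ABw k).filter q0 = List.replicate k (1 : Fin 3) := by
  induction k with
  | zero => simp [ABw]
  | succ k ih =>
    rw [ABw_succ, List.replicate_succ,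
      List.filter_cons_of_neg (by decide), List.filter_cons_of_pos (by decide), ih]

lemma two_not_mem_ABw (k : ℕ) : (2 : Fin 3) ∉ ABw k := by
  intro h
  rcases mem_ABw h with h | h <;> simp_all

end Helpers2
section Helpers3

lemma trEq_ab {I : Fin 3 → Fin 3 → Prop} (h10 : I 1 0) (M : ℕ) :
    TrEq I (List.replicate M 0 ++ List.replicate M 1) (ABw M) := by
  induction M with
  | zero => exact TrEq.refl _
  | succ M ih =>
    have h1 : TrEq I ((0 : Fin 3) :: 1 :: (List.replicate M 0 ++ List.replicate M 1))
        (0 :: (List.replicate M 0 ++ 1 :: List.replicate M 1)) :=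
      trEq_cons (trEq_move h10 M _) 0
    have h2 : TrEq I ((0 : Fin 3) :: 1 :: (List.replicate M 0 ++ List.replicate M 1))
        (0 :: 1 :: ABw M) := by
      simpa using trEq_context ih [0, 1] []
    have h3 := (TrEq.symm h1).trans h2
    rw [ABw_succ]
    have : List.replicate (M + 1) (0 : Fin 3) ++ List.replicate (M + 1) (1 : Fin 3)
        = 0 :: (List.replicate M 0 ++ 1 :: List.replicate M 1) := by
      simp [List.replicate_succ]
    rw [this]
    exact h3

lemma flatten_map_singleton {β : Type*} (l : List β) :
    (l.map (fun y => [y])).flatten = l := by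
  induction l with
  | nil => rfl
  | cons x t ih => simp [ih]

lemma mem_starChar {x : List (Fin 3)} {a : Fin 3} :
    x ∈ (RegularExpression.star (RegularExpression.char a)).matches' ↔ ∀ y ∈ x, y = a := by
  rw [RegularExpression.matches'_star, Language.mem_kstar]
  constructor
  · rintro ⟨L, rfl, hL⟩ y hy
    rcases List.mem_flatten.mp hy with ⟨l, hl, hyl⟩
    have := hL l hl
    rw [RegularExpression.matches'_char] at this
    have hl2 : l = [a] := this
    subst hl2
    simpa using hyl
  · intro h
    refine ⟨x.map (fun y => [y]), (flatten_map_singleton x).symm, ?_⟩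
    intro y hy
    rcases List.mem_map.mp hy with ⟨z, hz, rfl⟩
    rw [RegularExpression.matches'_char, h z hz]
    exact rfl

lemma mem_starAB {x : List (Fin 3)} :
    x ∈ (RegularExpression.star
      (RegularExpression.comp (RegularExpression.char 0) (RegularExpression.char 1))).matches' ↔
    ∃ k, x = ABw k := by
  rw [RegularExpression.matches'_star, Language.mem_kstar]
  constructor
  · rintro ⟨L, rfl, hL⟩
    refine ⟨L.length, ?_⟩
    have : L = List.replicate L.length ([0, 1] : List (Fin 3)) := by
      rw [List.eq_replicate_iff]
      refine ⟨rfl, fun l hl => ?_⟩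
      have := hL l hl
      rw [show (RegularExpression.comp (RegularExpression.char 0)
        (RegularExpression.char 1)).matches'
        = (RegularExpression.char (0 : Fin 3)).matches' * (RegularExpression.char 1).matches'
        from rfl, Language.mem_mul] at this
      rcases this with ⟨u, hu, v, hv, huv⟩
      simp only [RegularExpression.matches'_char, Set.mem_singleton_iff] at hu hv
      rw [← huv, hu, hv]
      rfl
    rw [ABw, ← this]
  · rintro ⟨k, rfl⟩
    refine ⟨List.replicate k ([0, 1] : List (Fin 3)), rfl, fun l hl => ?_⟩
    rw [List.eq_of_mem_replicate hl]
    rw [show (RegularExpression.comp (RegularExpression.char 0)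
        (RegularExpression.char 1)).matches'
        = (RegularExpression.char (0 : Fin 3)).matches' * (RegularExpression.char 1).matches'
        from rfl, Language.mem_mul]
    exact ⟨[0], by rw [RegularExpression.matches'_char]; exact rfl, [1],
      by rw [RegularExpression.matches'_char]; exact rfl, rfl⟩

end Helpers3
section Crux

lemma filt_rep_self {k : ℕ} {a : Fin 3} {p : Fin 3 → Bool} (h : p a = true) :
    (List.replicate k a).filter p = List.replicate k a := by
  rw [List.filter_replicate, if_pos h]

lemma filt_rep_nil {k : ℕ} {a : Fin 3} {p : Fin 3 → Bool} (h : p a = false) :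
    (List.replicate k a).filter p = [] := by
  rw [List.filter_replicate, if_neg (by simp [h])]

lemma crux1 {I : Fin 3 → Fin 3 → Prop}
    (hI : ∀ x y, I x y ↔ ((x = 0 ∧ y = 1) ∨ (x = 1 ∧ y = 0)))
    {M N : ℕ} (hMN : N < M)
    (h : EqScatEqLe I N
      (List.replicate M 0 ++ List.replicate M 1 ++ [2] ++ List.replicate M 0)
      (List.replicate M 0 ++ List.replicate M 1 ++ [2] ++ ABw M)
      (List.replicate M 1)) : False := by
  obtain ⟨u', v', hu', ⟨n, hnN, us, vs, husne, hvsne, huf, hvf, hzf, hind⟩, hv'⟩ := h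
  have hswap1 : ∀ a b, I a b → List.filter q1 [a, b] = List.filter q1 [b, a] := by
    intro a b hab
    rcases (hI a b).1 hab with ⟨rfl, rfl⟩ | ⟨rfl, rfl⟩ <;> decide
  -- v' facts
  have hv'len : v'.length = M := by
    have := trEq_length hv'
    simpa using this
  have hv'1 : ∀ x ∈ v', x = 1 := by
    have hf := trEq_filter _ hswap1 hv'
    rw [filt_rep_nil (by decide)] at hf
    intro x hx
    have := List.filter_eq_nil_iff.mp hf x hx
    simpa [q1] using this
  have hvs1 : ∀ j, j ≤ n → ∀ x ∈ vs j, x = 1 := by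
    intro j hj x hx
    apply hv'1
    rw [hvf]
    exact List.mem_flatten.mpr ⟨vs j,
      List.mem_map.mpr ⟨j, List.mem_range.mpr (by omega), rfl⟩, hx⟩
  -- u' facts
  have hu'f : u'.filter q1 = List.replicate M 0 ++ 2 :: List.replicate M 0 := by
    have hf := trEq_filter q1 hswap1 hu'
    rw [← hf]
    simp only [List.filter_append, filt_rep_self (by decide : q1 0 = true),
      filt_rep_nil (by decide : q1 1 = false)]
    have : List.filter q1 [2] = [2] := by decide
    rw [this]
    simp
  have h2u' : (2 : Fin 3) ∈ u' := by
    apply List.mem_of_mem_filter (p := q1)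
    rw [hu'f]
    simp
  -- n ≥ 1
  have hn0 : n ≠ 0 := by
    rintro rfl
    simp only [List.range_zero, List.map_nil, List.flatten_nil] at huf
    rw [huf] at h2u'
    simp at h2u'
  obtain ⟨m, rfl⟩ : ∃ m, n = m + 1 := ⟨n - 1, by omega⟩
  -- 2 is in us 1
  have h21 : (2 : Fin 3) ∈ us 1 := by
    rw [huf] at h2u'
    rcases List.mem_flatten.mp h2u' with ⟨l, hl, h2l⟩
    rcases List.mem_map.mp hl with ⟨i, hi, rfl⟩
    have hi' : i < m + 1 := List.mem_range.mp hi
    rcases Nat.eq_zero_or_pos i with rfl | hipos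
    · exact h2l
    · exfalso
      have hne : vs 1 ≠ [] := hvsne 1 le_rfl (by omega)
      obtain ⟨y, hy⟩ := List.exists_mem_of_ne_nil _ hne
      have hy1 : y = 1 := hvs1 1 (by omega) y hy
      have hIy2 := hind (i + 1) 1 (by omega) (by omega) (by omega) y hy 2 h2l
      rw [hy1, hI] at hIy2
      rcases hIy2 with ⟨h1, h2⟩ | ⟨h1, h2⟩ <;> exact absurd h2 (by decide)
  -- vs 0 = []
  have hvs0 : vs 0 = [] := by
    by_contra hne
    obtain ⟨y, hy⟩ := List.exists_mem_of_ne_nil _ hne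
    have hy1 : y = 1 := hvs1 0 (by omega) y hy
    have hIy2 := hind 1 0 le_rfl (by omega) (by omega) y hy 2 h21
    rw [hy1, hI] at hIy2
    rcases hIy2 with ⟨h1, h2⟩ | ⟨h1, h2⟩ <;> exact absurd h2 (by decide)
  -- structure of z
  rw [List.range_succ_eq_map, List.map_cons, List.flatten_cons, hvs0,
    List.nil_append] at hzf
  set rest := (List.map ((fun i => us (i + 1) ++ vs (i + 1)) ∘ Nat.succ)
      (List.range m)).flatten with hrest
  have hmapmap : (List.map (fun i => us (i + 1) ++ vs (i + 1))
      (List.map Nat.succ (List.range m))).flatten = rest := by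
    rw [hrest, List.map_map]
  rw [hmapmap] at hzf
  have hz2 : List.replicate M 0 ++ List.replicate M 1 ++ [2] ++ ABw M
      = us 1 ++ (vs 1 ++ rest) := by
    rw [hzf, List.append_assoc]
  -- the suffix r := vs 1 ++ rest contains no 2 and is a suffix of ABw M
  have hcz : (List.replicate M 0 ++ List.replicate M 1 ++ [2] ++ ABw M).count 2 = 1 := by
    simp [List.count_append, List.count_replicate,
      List.count_eq_zero.mpr (two_not_mem_ABw M)]
  have hcnt : (us 1).count 2 + (vs 1 ++ rest).count 2 = 1 := by
    rw [← List.count_append, ← hz2, hcz]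
  have h2r : (2 : Fin 3) ∉ vs 1 ++ rest := by
    intro hmem
    have h1 : 0 < (us 1).count 2 := List.count_pos_iff.mpr h21
    have h2 : 0 < (vs 1 ++ rest).count 2 := List.count_pos_iff.mpr hmem
    omega
  have hrsufz : (vs 1 ++ rest) <:+
      (List.replicate M 0 ++ List.replicate M 1 ++ [2] ++ ABw M) := ⟨us 1, hz2.symm⟩
  have hcab : ((2 : Fin 3) :: ABw M) <:+
      (List.replicate M 0 ++ List.replicate M 1 ++ [2] ++ ABw M) :=
    ⟨List.replicate M 0 ++ List.replicate M 1, by simp [List.append_assoc]⟩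
  have hsufAB : (vs 1 ++ rest) <:+ ABw M := by
    rcases List.suffix_or_suffix_of_suffix hrsufz hcab with hs | hs
    · rcases List.suffix_cons_iff.mp hs with hs' | hs'
      · exact absurd (by rw [hs']; simp : (2:Fin 3) ∈ vs 1 ++ rest) h2r
      · exact hs'
    · exact absurd (hs.subset (by simp)) h2r
  -- each block vs j, 1 ≤ j ≤ m+1, is an infix of ABw M
  have hinf : ∀ j, 1 ≤ j → j ≤ m + 1 → vs j <:+: ABw M := by
    intro j h1j hjm
    refine List.IsInfix.trans ?_ hsufAB.isInfix
    rcases Nat.lt_or_ge j 2 with hj2 | hj2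
    · have : j = 1 := by omega
      subst this
      exact ((vs 1).prefix_append rest).isInfix
    · have hmem : us j ++ vs j ∈ List.map ((fun i => us (i + 1) ++ vs (i + 1)) ∘ Nat.succ)
          (List.range m) := by
        refine List.mem_map.mpr ⟨j - 2, List.mem_range.mpr (by omega), ?_⟩
        have : j - 2 + 1 + 1 = j := by omega
        simp only [Function.comp_apply, Nat.succ_eq_add_one, this]
      have h1 : vs j <:+: us j ++ vs j := (List.suffix_append (us j) (vs j)).isInfix
      have h2 : us j ++ vs j <:+: rest := List.infix_of_mem_flatten hmem
      have h3 : rest <:+: vs 1 ++ rest := (List.suffix_append (vs 1) rest).isInfix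
      exact (h1.trans h2).trans h3
  have hlen1 : ∀ j, 1 ≤ j → j ≤ m + 1 → (vs j).length ≤ 1 := fun j h1 h2 =>
    infix_ABw_short (hvs1 j (by omega)) (hinf j h1 h2)
  -- sum bound
  have hsum : v'.length = (((List.range (m + 2)).map vs).map List.length).sum := by
    rw [hvf, List.length_flatten]
  rw [List.range_succ_eq_map, List.map_cons, List.map_cons, List.sum_cons, hvs0,
    List.map_map, List.map_map] at hsum
  simp only [Function.comp_def, Nat.succ_eq_add_one] at hsum
  have hb : ∀ x ∈ (List.range (m + 1)).map (fun i => (vs (i + 1)).length), x ≤ 1 := by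
    intro x hx
    rcases List.mem_map.mp hx with ⟨i, hi, rfl⟩
    have := List.mem_range.mp hi
    exact hlen1 (i + 1) (by omega) (by omega)
  have hle := List.sum_le_card_nsmul _ 1 hb
  simp only [List.length_map, List.length_range, smul_eq_mul, mul_one] at hle
  simp only [List.length_nil, Nat.succ_eq_add_one] at hsum
  omega

end Crux
lemma crux2 {I : Fin 3 → Fin 3 → Prop}
    (hI : ∀ x y, I x y ↔ ((x = 0 ∧ y = 1) ∨ (x = 1 ∧ y = 0)))
    {M N : ℕ} (hMN : N < M)
    (h : EqScatEqLe I N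
      (List.replicate M 0)
      (ABw M ++ [2] ++ List.replicate M 0 ++ List.replicate M 1)
      (List.replicate M 1 ++ [2] ++ List.replicate M 0 ++ List.replicate M 1)) : False := by
  obtain ⟨u', v', hu', ⟨n, hnN, us, vs, husne, hvsne, huf, hvf, hzf, hind⟩, hv'⟩ := h
  have hswap1 : ∀ a b, I a b → List.filter q1 [a, b] = List.filter q1 [b, a] := by
    intro a b hab
    rcases (hI a b).1 hab with ⟨rfl, rfl⟩ | ⟨rfl, rfl⟩ <;> decide
  have hswap0 : ∀ a b, I a b → List.filter q0 [a, b] = List.filter q0 [b, a] := by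
    intro a b hab
    rcases (hI a b).1 hab with ⟨rfl, rfl⟩ | ⟨rfl, rfl⟩ <;> decide
  -- u' = replicate M 0
  have hu'0 : u' = List.replicate M 0 := by
    rw [List.eq_replicate_iff]
    constructor
    · have := trEq_length hu'
      simpa using this.symm
    · intro x hx
      have hf := trEq_filter q0 hswap0 hu'
      rw [filt_rep_nil (by decide)] at hf
      have := List.filter_eq_nil_iff.mp hf.symm x hx
      simpa [q0] using this
  have hus0 : ∀ i, i < n → ∀ x ∈ us (i + 1), x = 0 := by
    intro i hi x hx
    have hxu : x ∈ u' := by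
      rw [huf]
      exact List.mem_flatten.mpr ⟨us (i + 1),
        List.mem_map.mpr ⟨i, List.mem_range.mpr hi, rfl⟩, hx⟩
    rw [hu'0] at hxu
    exact List.eq_of_mem_replicate hxu
  have hn0 : n ≠ 0 := by
    rintro rfl
    simp only [List.range_zero, List.map_nil, List.flatten_nil] at huf
    rw [huf] at hu'0
    have : (0:ℕ) = M := by simpa using congrArg List.length hu'0
    omega
  -- 2 is in vs n
  have hv'f : v'.filter q1 = 2 :: List.replicate M 0 := by
    have hf := trEq_filter q1 hswap1 hv'
    rw [hf]
    simp only [List.filter_append, filt_rep_self (by decide : q1 0 = true),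
      filt_rep_nil (by decide : q1 1 = false)]
    have : List.filter q1 [2] = [2] := by decide
    rw [this]
    simp
  have h2v' : (2 : Fin 3) ∈ v' := by
    apply List.mem_of_mem_filter (p := q1)
    rw [hv'f]
    simp
  obtain ⟨j0, hj0n, h2vj⟩ : ∃ j, j < n + 1 ∧ (2 : Fin 3) ∈ vs j := by
    rw [hvf] at h2v'
    rcases List.mem_flatten.mp h2v' with ⟨l, hl, h2l⟩
    rcases List.mem_map.mp hl with ⟨j, hj, rfl⟩
    exact ⟨j, List.mem_range.mp hj, h2l⟩
  have h2n : (2 : Fin 3) ∈ vs n := by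
    rcases Nat.lt_or_ge j0 n with hlt | hge
    · exfalso
      obtain ⟨y, hy⟩ := List.exists_mem_of_ne_nil _ (husne n (by omega) le_rfl)
      have hy0 : y = 0 := by
        obtain ⟨m, rfl⟩ : ∃ m, n = m + 1 := ⟨n - 1, by omega⟩
        exact hus0 m (by omega) y hy
      have hI2y := hind n j0 (by omega) le_rfl hlt 2 h2vj y hy
      rw [hy0, hI] at hI2y
      rcases hI2y with ⟨h1, h2⟩ | ⟨h1, h2⟩ <;> exact absurd h1 (by decide)
    · have : j0 = n := by omega
      exact this ▸ h2vj
  -- vs j for j < n consists of 1's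
  have hvs1 : ∀ j, j < n → ∀ x ∈ vs j, x = 1 := by
    intro j hj x hx
    obtain ⟨y, hy⟩ := List.exists_mem_of_ne_nil _ (husne n (by omega) le_rfl)
    have hy0 : y = 0 := by
      obtain ⟨m, rfl⟩ : ∃ m, n = m + 1 := ⟨n - 1, by omega⟩
      exact hus0 m (by omega) y hy
    have hIxy := hind n j (by omega) le_rfl hj x hx y hy
    rw [hy0, hI] at hIxy
    rcases hIxy with ⟨h1, h2⟩ | ⟨h1, h2⟩
    · exact absurd h2 (by decide)
    · exact h1
  -- structure of z : z = q ++ vs n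
  obtain ⟨m, rfl⟩ : ∃ m, n = m + 1 := ⟨n - 1, by omega⟩
  rw [List.range_succ, List.map_append, List.flatten_append, List.map_cons,
    List.map_nil, List.flatten_cons, List.flatten_nil, List.append_nil] at hzf
  set flat := (List.map (fun i => us (i + 1) ++ vs (i + 1)) (List.range m)).flatten
    with hflat
  have hz2 : ABw M ++ [2] ++ List.replicate M 0 ++ List.replicate M 1
      = (vs 0 ++ flat ++ us (m + 1)) ++ vs (m + 1) := by
    rw [hzf]
    simp [List.append_assoc]
  set q := vs 0 ++ flat ++ us (m + 1) with hq
  have hq2 : ∀ x ∈ q, x ≠ 2 := by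
    intro x hx
    rcases List.mem_append.mp hx with hx | hx
    · rcases List.mem_append.mp hx with hx | hx
      · rw [hvs1 0 (by omega) x hx]; decide
      · rcases List.mem_flatten.mp hx with ⟨l, hl, hxl⟩
        rcases List.mem_map.mp hl with ⟨i, hi, rfl⟩
        have hi' := List.mem_range.mp hi
        rcases List.mem_append.mp hxl with hx' | hx'
        · rw [hus0 i (by omega) x hx']; decide
        · rw [hvs1 (i + 1) (by omega) x hx']; decide
    · rw [hus0 m (by omega) x hx]; decide
  have hqpre : q <+: ABw M ++ [2] ++ List.replicate M 0 ++ List.replicate M 1 :=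
    ⟨vs (m + 1), hz2.symm⟩
  have habpre : ABw M ++ [2] <+: ABw M ++ [2] ++ List.replicate M 0 ++ List.replicate M 1 :=
    ⟨List.replicate M 0 ++ List.replicate M 1, by simp [List.append_assoc]⟩
  have hqAB : q <+: ABw M := by
    have hq' : q <+: ABw M ++ [2] := by
      rcases List.prefix_or_prefix_of_prefix hqpre habpre with hp | hp
      · exact hp
      · exfalso
        exact hq2 2 (hp.subset (by simp)) rfl
    refine List.prefix_of_prefix_length_le hq' (List.prefix_append _ _) ?_
    obtain ⟨t, ht⟩ := hq'
    rcases t with _ | ⟨x, ts⟩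
    · exfalso
      rw [List.append_nil] at ht
      exact hq2 2 (ht ▸ (by simp : (2:Fin 3) ∈ ABw M ++ [2])) rfl
    · have := congrArg List.length ht
      simp at this ⊢
      omega
  -- each us i is an infix of ABw M
  have hinf : ∀ i, 1 ≤ i → i ≤ m + 1 → us i <:+: ABw M := by
    intro i h1i him
    refine List.IsInfix.trans ?_ hqAB.isInfix
    rcases Nat.lt_or_ge i (m + 1) with hi | hi
    · have hmem : us i ++ vs i ∈ List.map (fun i => us (i + 1) ++ vs (i + 1))
          (List.range m) := by
        refine List.mem_map.mpr ⟨i - 1, List.mem_range.mpr (by omega), ?_⟩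
        have : i - 1 + 1 = i := by omega
        rw [this]
      have h1 : us i <:+: us i ++ vs i := (List.prefix_append _ _).isInfix
      have h2 : us i ++ vs i <:+: flat := List.infix_of_mem_flatten hmem
      have h3 : flat <:+: q := ⟨vs 0, us (m + 1), by simp [hq, List.append_assoc]⟩
      exact (h1.trans h2).trans h3
    · have : i = m + 1 := by omega
      subst this
      exact (List.suffix_append _ _).isInfix
  have hlen1 : ∀ i, 1 ≤ i → i ≤ m + 1 → (us i).length ≤ 1 := by
    intro i h1 h2
    refine infix_ABw_short (x := 0) ?_ (hinf i h1 h2)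
    intro y hy
    obtain ⟨i', rfl⟩ : ∃ i', i = i' + 1 := ⟨i - 1, by omega⟩
    exact hus0 i' (by omega) y hy
  -- sum bound
  have hsum : u'.length = (((List.range (m + 1)).map (fun i => us (i + 1))).map
      List.length).sum := by
    rw [huf, List.length_flatten]
  rw [List.map_map] at hsum
  have hb : ∀ x ∈ (List.range (m + 1)).map (List.length ∘ fun i => us (i + 1)), x ≤ 1 := by
    intro x hx
    rcases List.mem_map.mp hx with ⟨i, hi, rfl⟩
    have := List.mem_range.mp hi
    exact hlen1 (i + 1) (by omega) (by omega)
  have hle := List.sum_le_card_nsmul _ 1 hb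
  simp only [List.length_map, List.length_range, smul_eq_mul, mul_one] at hle
  have hulen : u'.length = M := by rw [hu'0]; simp
  omega
lemma swap_q1' {I : Fin 3 → Fin 3 → Prop}
    (hI : ∀ x y, I x y ↔ ((x = 0 ∧ y = 1) ∨ (x = 1 ∧ y = 0))) :
    ∀ a b, I a b → List.filter q1 [a, b] = List.filter q1 [b, a] := by
  intro a b hab
  rcases (hI a b).1 hab with ⟨rfl, rfl⟩ | ⟨rfl, rfl⟩ <;> decide

lemma swap_q0' {I : Fin 3 → Fin 3 → Prop}
    (hI : ∀ x y, I x y ↔ ((x = 0 ∧ y = 1) ∨ (x = 1 ∧ y = 0))) :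
    ∀ a b, I a b → List.filter q0 [a, b] = List.filter q0 [b, a] := by
  intro a b hab
  rcases (hI a b).1 hab with ⟨rfl, rfl⟩ | ⟨rfl, rfl⟩ <;> decide

lemma f21 : List.filter q1 [2] = [2] := by decide
lemma f20 : List.filter q0 [2] = [2] := by decide

lemma rep_eq_rep_len {k m : ℕ} {a : Fin 3}
    (h : List.replicate k a = List.replicate m a) : k = m := by
  have := congrArg List.length h
  simpa using this
/-- over Σ = {a, b, c} with independence exactly a I b,
E = a✶b✶c(ab)✶(a✶ + b✶) + (ab)✶(a✶ + b✶)ca✶b✶ has no uniform rank. -/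
theorem stmt14 (I : Fin 3 → Fin 3 → Prop)
    (hI : ∀ x y, I x y ↔ ((x = 0 ∧ y = 1) ∨ (x = 1 ∧ y = 0)))
    (A B C : RegularExpression (Fin 3))
    (hA : A = char 0) (hB : B = char 1) (hC : C = char 2)
    (E : RegularExpression (Fin 3))
    (hE : E = plus
      (comp (comp (comp (comp (RegularExpression.star A) (RegularExpression.star B)) C)
          (RegularExpression.star (comp A B)))
        (plus (RegularExpression.star A) (RegularExpression.star B)))
      (comp (comp (comp (RegularExpression.star (comp A B))
          (plus (RegularExpression.star A) (RegularExpression.star B))) C)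
        (comp (RegularExpression.star A) (RegularExpression.star B)))) :
    ∀ N : ℕ, ¬ HasUniformRankLe I E.matches' N := by
  subst hA hB hC hE
  intro N hN
  set M := N + 1 with hMdef
  have hMN : N < M := by omega
  have h10 : I 1 0 := (hI 1 0).2 (Or.inr ⟨rfl, rfl⟩)
  -- basic memberships
  have m0 : ∀ k, List.replicate k (0 : Fin 3)
      ∈ (RegularExpression.star (char (0 : Fin 3))).matches' :=
    fun k => mem_starChar.mpr (fun y hy => List.eq_of_mem_replicate hy)
  have m1 : ∀ k, List.replicate k (1 : Fin 3)
      ∈ (RegularExpression.star (char (1 : Fin 3))).matches' :=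
    fun k => mem_starChar.mpr (fun y hy => List.eq_of_mem_replicate hy)
  have mC : [(2 : Fin 3)] ∈ (char (2 : Fin 3)).matches' := by
    rw [RegularExpression.matches'_char]; exact rfl
  have mAB : ABw M ∈ (RegularExpression.star (comp (char (0:Fin 3)) (char 1))).matches' :=
    mem_starAB.mpr ⟨M, rfl⟩
  -- z1 is in the language
  have hz1mem : (List.replicate M (0 : Fin 3) ++ List.replicate M 1 ++ [2] ++ ABw M)
      ∈ (plus
      (comp (comp (comp (comp (RegularExpression.star (char 0)) (RegularExpression.star (char 1))) (char 2))
          (RegularExpression.star (comp (char 0) (char 1))))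
        (plus (RegularExpression.star (char 0)) (RegularExpression.star (char 1))))
      (comp (comp (comp (RegularExpression.star (comp (char 0) (char 1)))
          (plus (RegularExpression.star (char 0)) (RegularExpression.star (char 1)))) (char 2))
        (comp (RegularExpression.star (char 0)) (RegularExpression.star (char 1))))).matches' := by
    refine Or.inl ?_
    rw [show (comp (comp (comp (comp (RegularExpression.star (char (0:Fin 3))) (RegularExpression.star (char 1))) (char 2))
          (RegularExpression.star (comp (char 0) (char 1))))
        (plus (RegularExpression.star (char 0)) (RegularExpression.star (char 1)))).matches'
      = (comp (comp (comp (RegularExpression.star (char (0:Fin 3))) (RegularExpression.star (char 1))) (char 2))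
          (RegularExpression.star (comp (char 0) (char 1)))).matches'
        * (plus (RegularExpression.star (char (0:Fin 3))) (RegularExpression.star (char 1))).matches' from rfl]
    refine Language.mem_mul.mpr ?_
    refine ⟨List.replicate M (0:Fin 3) ++ List.replicate M 1 ++ [2] ++ ABw M, ?_, [],
      Or.inl (Language.nil_mem_kstar _), by simp⟩
    rw [show (comp (comp (comp (RegularExpression.star (char (0:Fin 3))) (RegularExpression.star (char 1))) (char 2))
          (RegularExpression.star (comp (char 0) (char 1)))).matches'
      = (comp (comp (RegularExpression.star (char (0:Fin 3))) (RegularExpression.star (char 1))) (char 2)).matches'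
        * (RegularExpression.star (comp (char (0:Fin 3)) (char 1))).matches' from rfl,
      Language.mem_mul]
    refine ⟨_, ?_, ABw M, mAB, rfl⟩
    rw [show (comp (comp (RegularExpression.star (char (0:Fin 3))) (RegularExpression.star (char 1))) (char 2)).matches'
      = (comp (RegularExpression.star (char (0:Fin 3))) (RegularExpression.star (char 1))).matches'
        * (char (2:Fin 3)).matches' from rfl, Language.mem_mul]
    refine ⟨_, ?_, [2], mC, rfl⟩
    rw [show (comp (RegularExpression.star (char (0:Fin 3))) (RegularExpression.star (char 1))).matches'
      = (RegularExpression.star (char (0:Fin 3))).matches'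
        * (RegularExpression.star (char (1:Fin 3))).matches' from rfl, Language.mem_mul]
    exact ⟨_, m0 M, _, m1 M, rfl⟩
  -- w is in the trace closure
  have hwz1 : TrEq I
      (List.replicate M (0:Fin 3) ++ List.replicate M 1 ++ [2]
        ++ List.replicate M 0 ++ List.replicate M 1)
      (List.replicate M (0:Fin 3) ++ List.replicate M 1 ++ [2] ++ ABw M) := by
    have := trEq_context (trEq_ab h10 M)
      (List.replicate M (0:Fin 3) ++ List.replicate M 1 ++ [2]) []
    simpa [List.append_assoc] using this
  obtain ⟨z, hzE, hzall⟩ := hN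
    (List.replicate M (0:Fin 3) ++ List.replicate M 1 ++ [2]
      ++ List.replicate M 0 ++ List.replicate M 1)
    ⟨_, hz1mem, hwz1⟩
  -- z is trace equivalent to w (use the trivial split)
  have hwz : TrEq I
      (List.replicate M (0:Fin 3) ++ List.replicate M 1 ++ [2]
        ++ List.replicate M 0 ++ List.replicate M 1) z := by
    obtain ⟨u', v', hwu', ⟨n, hnN, us, vs, husne, hvsne, huf, hvf, hzf, hind⟩, hv'nil⟩ :=
      hzall (List.replicate M (0:Fin 3) ++ List.replicate M 1 ++ [2]
        ++ List.replicate M 0 ++ List.replicate M 1) [] (by simp)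
    have hlv : v'.length = 0 := by
      have := trEq_length hv'nil
      simpa using this
    have hv' : v' = [] := List.length_eq_zero_iff.mp hlv
    have hvsnil : ∀ j, j < n + 1 → vs j = [] := by
      intro j hj
      rw [hv'] at hvf
      exact List.flatten_eq_nil_iff.mp hvf.symm _
        (List.mem_map.mpr ⟨j, List.mem_range.mpr hj, rfl⟩)
    have hn1 : n ≤ 1 := by
      by_contra hc
      exact hvsne 1 le_rfl (by omega) (hvsnil 1 (by omega))
    have hn0 : n ≠ 0 := by
      rintro rfl
      simp only [List.range_zero, List.map_nil, List.flatten_nil] at huf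
      have := trEq_length hwu'
      rw [huf] at this
      simp only [List.length_append, List.length_replicate, List.length_nil,
        List.length_cons] at this
      omega
    have hn : n = 1 := by omega
    subst hn
    have hzu : z = u' := by
      rw [hzf, huf]
      simp [List.range_succ, hvsnil 0 (by omega), hvsnil 1 (by omega)]
    rw [hzu]
    exact hwu'
  -- filters of z
  have hzf1 : z.filter q1 = List.replicate M 0 ++ 2 :: List.replicate M 0 := by
    have hf := trEq_filter q1 (swap_q1' hI) hwz
    rw [← hf]
    simp only [List.filter_append, filt_rep_self (by decide : q1 0 = true),
      filt_rep_nil (by decide : q1 1 = false), f21]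
    simp
  have hzf0 : z.filter q0 = List.replicate M 1 ++ 2 :: List.replicate M 1 := by
    have hf := trEq_filter q0 (swap_q0' hI) hwz
    rw [← hf]
    simp only [List.filter_append, filt_rep_self (by decide : q0 1 = true),
      filt_rep_nil (by decide : q0 0 = false), f20]
    simp
  -- case analysis on which summand z lies in
  rcases hzE with hz | hz
  · -- z = x1 ++ x2 ++ [2] ++ (ab)^k ++ t
    rcases Language.mem_mul.mp hz with ⟨x, hx, t, ht, rfl⟩
    rcases Language.mem_mul.mp hx with ⟨y, hy, s, hs, rfl⟩
    rcases Language.mem_mul.mp hy with ⟨y2, hy2, c2, hc2, rfl⟩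
    rcases Language.mem_mul.mp hy2 with ⟨x1, hx1, x2, hx2, rfl⟩
    have hc2' : c2 = [2] := hc2
    subst hc2'
    obtain ⟨k, rfl⟩ := mem_starAB.mp hs
    obtain ⟨i, rfl⟩ : ∃ i, x1 = List.replicate i 0 :=
      ⟨x1.length, List.eq_replicate_iff.mpr ⟨rfl, mem_starChar.mp hx1⟩⟩
    obtain ⟨j, rfl⟩ : ∃ j, x2 = List.replicate j 1 :=
      ⟨x2.length, List.eq_replicate_iff.mpr ⟨rfl, mem_starChar.mp hx2⟩⟩
    rcases ht with ht | ht
    · obtain ⟨l, rfl⟩ : ∃ l, t = List.replicate l 0 :=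
        ⟨t.length, List.eq_replicate_iff.mpr ⟨rfl, mem_starChar.mp ht⟩⟩
      simp only [List.filter_append, filt_rep_self (by decide : q1 0 = true),
        filt_rep_nil (by decide : q1 1 = false), filter_ne1_ABw, f21,
        List.append_nil, List.nil_append] at hzf1
      simp only [List.append_assoc, List.singleton_append] at hzf1
      simp only [List.filter_append, filt_rep_self (by decide : q0 1 = true),
        filt_rep_nil (by decide : q0 0 = false), filter_ne0_ABw, f20,
        List.append_nil, List.nil_append] at hzf0
      simp only [List.append_assoc, List.singleton_append] at hzf0
      obtain ⟨hiM, h2⟩ := rep_two_eq (show (0:Fin 3) ≠ 2 by decide) _ hzf1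
      obtain ⟨hjM, h2'⟩ := rep_two_eq (show (1:Fin 3) ≠ 2 by decide) _ hzf0
      have hkl : k + l = M := by
        have := congrArg List.length h2
        simpa [List.append_eq] using this
      have hkM : k = M := rep_eq_rep_len h2'
      have hl0 : l = 0 := by omega
      subst hiM hjM hkM hl0
      have h := hzall
        (List.replicate M 0 ++ List.replicate M 1 ++ [2] ++ List.replicate M 0)
        (List.replicate M 1) (by simp [List.append_assoc])
      simp only [List.replicate_zero, List.append_nil] at h
      exact crux1 hI hMN h
    · obtain ⟨l, rfl⟩ : ∃ l, t = List.replicate l 1 :=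
        ⟨t.length, List.eq_replicate_iff.mpr ⟨rfl, mem_starChar.mp ht⟩⟩
      simp only [List.filter_append, filt_rep_self (by decide : q1 0 = true),
        filt_rep_nil (by decide : q1 1 = false), filter_ne1_ABw, f21,
        List.append_nil, List.nil_append] at hzf1
      simp only [List.append_assoc, List.singleton_append] at hzf1
      simp only [List.filter_append, filt_rep_self (by decide : q0 1 = true),
        filt_rep_nil (by decide : q0 0 = false), filter_ne0_ABw, f20,
        List.append_nil, List.nil_append] at hzf0
      simp only [List.append_assoc, List.singleton_append] at hzf0
      obtain ⟨hiM, h2⟩ := rep_two_eq (show (0:Fin 3) ≠ 2 by decide) _ hzf1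
      obtain ⟨hjM, h2'⟩ := rep_two_eq (show (1:Fin 3) ≠ 2 by decide) _ hzf0
      have hkl : k + l = M := by
        have := congrArg List.length h2'
        simpa [List.append_eq] using this
      have hkM : k = M := rep_eq_rep_len h2
      have hl0 : l = 0 := by omega
      subst hiM hjM hkM hl0
      have h := hzall
        (List.replicate M 0 ++ List.replicate M 1 ++ [2] ++ List.replicate M 0)
        (List.replicate M 1) (by simp [List.append_assoc])
      simp only [List.replicate_zero, List.append_nil] at h
      exact crux1 hI hMN h
  · -- z = (ab)^k ++ t ++ [2] ++ x1 ++ x2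
    rcases Language.mem_mul.mp hz with ⟨x, hx, y2, hy2, rfl⟩
    rcases Language.mem_mul.mp hy2 with ⟨x1, hx1, x2, hx2, rfl⟩
    rcases Language.mem_mul.mp hx with ⟨y, hy, c2, hc2, rfl⟩
    rcases Language.mem_mul.mp hy with ⟨s, hs, t, ht, rfl⟩
    have hc2' : c2 = [2] := hc2
    subst hc2'
    obtain ⟨k, rfl⟩ := mem_starAB.mp hs
    obtain ⟨i, rfl⟩ : ∃ i, x1 = List.replicate i 0 :=
      ⟨x1.length, List.eq_replicate_iff.mpr ⟨rfl, mem_starChar.mp hx1⟩⟩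
    obtain ⟨j, rfl⟩ : ∃ j, x2 = List.replicate j 1 :=
      ⟨x2.length, List.eq_replicate_iff.mpr ⟨rfl, mem_starChar.mp hx2⟩⟩
    rcases ht with ht | ht
    · obtain ⟨l, rfl⟩ : ∃ l, t = List.replicate l 0 :=
        ⟨t.length, List.eq_replicate_iff.mpr ⟨rfl, mem_starChar.mp ht⟩⟩
      simp only [List.filter_append, filt_rep_self (by decide : q1 0 = true),
        filt_rep_nil (by decide : q1 1 = false), filter_ne1_ABw, f21,
        List.append_nil, List.nil_append] at hzf1
      simp only [List.filter_append, filt_rep_self (by decide : q0 1 = true),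
        filt_rep_nil (by decide : q0 0 = false), filter_ne0_ABw, f20,
        List.append_nil, List.nil_append] at hzf0
      rw [← List.replicate_add] at hzf1
      simp only [List.append_assoc, List.singleton_append] at hzf1 hzf0
      obtain ⟨hklM, hiM⟩ := rep_two_eq (show (0:Fin 3) ≠ 2 by decide) _ hzf1
      obtain ⟨hkM, hjM⟩ := rep_two_eq (show (1:Fin 3) ≠ 2 by decide) _ hzf0
      have hiM' : i = M := rep_eq_rep_len hiM
      have hjM' : j = M := rep_eq_rep_len hjM
      have hl0 : l = 0 := by omega
      subst hkM hiM' hjM' hl0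
      have h := hzall (List.replicate M 0)
        (List.replicate M 1 ++ [2] ++ List.replicate M 0 ++ List.replicate M 1)
        (by simp [List.append_assoc])
      simp only [List.replicate_zero, List.append_nil] at h
      rw [show (ABw M ++ [2]) ++ (List.replicate M (0:Fin 3) ++ List.replicate M 1)
          = ABw M ++ [2] ++ List.replicate M 0 ++ List.replicate M 1 from by
        simp [List.append_assoc]] at h
      exact crux2 hI hMN h
    · obtain ⟨l, rfl⟩ : ∃ l, t = List.replicate l 1 :=
        ⟨t.length, List.eq_replicate_iff.mpr ⟨rfl, mem_starChar.mp ht⟩⟩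
      simp only [List.filter_append, filt_rep_self (by decide : q1 0 = true),
        filt_rep_nil (by decide : q1 1 = false), filter_ne1_ABw, f21,
        List.append_nil, List.nil_append] at hzf1
      simp only [List.filter_append, filt_rep_self (by decide : q0 1 = true),
        filt_rep_nil (by decide : q0 0 = false), filter_ne0_ABw, f20,
        List.append_nil, List.nil_append] at hzf0
      rw [← List.replicate_add] at hzf0
      simp only [List.append_assoc, List.singleton_append] at hzf1 hzf0
      obtain ⟨hkM, hiM⟩ := rep_two_eq (show (0:Fin 3) ≠ 2 by decide) _ hzf1
      obtain ⟨hklM, hjM⟩ := rep_two_eq (show (1:Fin 3) ≠ 2 by decide) _ hzf0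
      have hiM' : i = M := rep_eq_rep_len hiM
      have hjM' : j = M := rep_eq_rep_len hjM
      have hl0 : l = 0 := by omega
      subst hkM hiM' hjM' hl0
      have h := hzall (List.replicate M 0)
        (List.replicate M 1 ++ [2] ++ List.replicate M 0 ++ List.replicate M 1)
        (by simp [List.append_assoc])
      simp only [List.replicate_zero, List.append_nil] at h
      rw [show (ABw M ++ [2]) ++ (List.replicate M (0:Fin 3) ++ List.replicate M 1)
          = ABw M ++ [2] ++ List.replicate M 0 ++ List.replicate M 1 from by
        simp [List.append_assoc]] at h
      exact crux2 hI hMN h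
end

section
/- The refined Antimirov reordering parts-of-derivatives along a letter are correct: for every regular expression E over Σ, letter a, and words v_l, v_r, one has (v_l I a and v_l ++ [a] ++ v_r ∈ ⟦E⟧) if and only if there exist E_l, E_r with E →^I (a; E_l, E_r), v_l ∈ ⟦E_l⟧ and v_r ∈ ⟦E_r⟧. -/
open RegularExpression
open scoped Classical

universe u

variable {α : Type u}

open scoped Computability in
lemma mem_Rexp_iff {I : α → α → Prop} (hsym : Symmetric I) (a : α)
    (E : RegularExpression α) (v : List α) :
    v ∈ (Rexp I a E).matches' ↔ v ∈ E.matches' ∧ ∀ b ∈ v, I b a := by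
  induction E generalizing v with
  | zero =>
      show v ∈ (0 : Language α) ↔ v ∈ (0 : Language α) ∧ _
      simp [Language.notMem_zero]
  | epsilon =>
      show v ∈ (1 : Language α) ↔ v ∈ (1 : Language α) ∧ _
      rw [Language.mem_one]
      constructor
      · rintro rfl; exact ⟨rfl, by simp⟩
      · rintro ⟨rfl, _⟩; rfl
  | char b =>
      show v ∈ (if I a b then char b else zero).matches' ↔ v ∈ ({[b]} : Language α) ∧ _
      by_cases h : I a b
      · rw [if_pos h]
        show v ∈ ({[b]} : Language α) ↔ _
        constructor
        · rintro rfl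
          exact ⟨rfl, by rintro c hc; simp at hc; subst hc; exact hsym h⟩
        · rintro ⟨rfl, _⟩; rfl
      · rw [if_neg h]
        show v ∈ (0 : Language α) ↔ _
        simp only [Language.notMem_zero, false_iff]
        rintro ⟨hv, h2⟩
        change v = [b] at hv
        subst hv
        exact h (hsym (h2 b (by simp)))
  | plus E F ihE ihF =>
      show v ∈ (Rexp I a E).matches' + (Rexp I a F).matches' ↔
        v ∈ E.matches' + F.matches' ∧ _
      simp only [Language.mem_add]
      rw [ihE, ihF]
      constructor
      · rintro (⟨h1, h2⟩ | ⟨h1, h2⟩)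
        · exact ⟨Or.inl h1, h2⟩
        · exact ⟨Or.inr h1, h2⟩
      · rintro ⟨h1 | h1, h2⟩
        · exact Or.inl ⟨h1, h2⟩
        · exact Or.inr ⟨h1, h2⟩
  | comp E F ihE ihF =>
      show v ∈ (Rexp I a E).matches' * (Rexp I a F).matches' ↔
        v ∈ E.matches' * F.matches' ∧ _
      simp only [Language.mem_mul]
      constructor
      · rintro ⟨x, hx, y, hy, rfl⟩
        rw [ihE] at hx; rw [ihF] at hy
        refine ⟨⟨x, hx.1, y, hy.1, rfl⟩, ?_⟩
        intro b hb
        rcases List.mem_append.1 hb with hb | hb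
        · exact hx.2 b hb
        · exact hy.2 b hb
      · rintro ⟨⟨x, hx, y, hy, rfl⟩, hind⟩
        refine ⟨x, (ihE x).2 ⟨hx, fun b hb => hind b (List.mem_append.2 (Or.inl hb))⟩,
          y, (ihF y).2 ⟨hy, fun b hb => hind b (List.mem_append.2 (Or.inr hb))⟩, rfl⟩
  | star E ihE =>
      show v ∈ (Rexp I a E).matches'∗ ↔ v ∈ E.matches'∗ ∧ _
      simp only [Language.mem_kstar]
      constructor
      · rintro ⟨L, rfl, hL⟩
        refine ⟨⟨L, rfl, fun y hy => ((ihE y).1 (hL y hy)).1⟩, ?_⟩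
        intro b hb
        rcases List.mem_flatten.1 hb with ⟨y, hy, hby⟩
        exact ((ihE y).1 (hL y hy)).2 b hby
      · rintro ⟨⟨L, rfl, hL⟩, hind⟩
        refine ⟨L, rfl, fun y hy => (ihE y).2 ⟨hL y hy, fun b hb =>
          hind b (List.mem_flatten.2 ⟨y, hy, hb⟩)⟩⟩

open scoped Computability in
lemma rantim_fwd {I : α → α → Prop} (hsym : Symmetric I) (a : α) :
    ∀ (E : RegularExpression α) (vl vr : List α),
      (∀ b ∈ vl, I b a) → vl ++ a :: vr ∈ E.matches' →
      ∃ El Er, RAntim I E a El Er ∧ vl ∈ El.matches' ∧ vr ∈ Er.matches' := by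
  intro E
  induction E with
  | zero => intro vl vr _ h; exact absurd h (Language.notMem_zero _)
  | epsilon =>
      intro vl vr _ h
      rw [show RegularExpression.epsilon.matches' = (1 : Language α) from rfl,
        Language.mem_one] at h
      exact absurd h (by simp)
  | char b =>
      intro vl vr _ h
      rw [show (char b).matches' = ({[b]} : Language α) from rfl] at h
      change vl ++ a :: vr = [b] at h
      have hvl : vl = [] := by
        cases vl with
        | nil => rfl
        | cons c t =>
            rw [List.cons_append] at h
            simp only [List.cons.injEq] at h
            exact absurd h.2 (by simp)
      subst hvl
      simp only [List.nil_append, List.cons.injEq] at h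
      obtain ⟨rfl, rfl⟩ := h
      refine ⟨epsilon, epsilon, RAntim.chr a, ?_, ?_⟩ <;>
        exact Language.nil_mem_one
  | plus E F ihE ihF =>
      intro vl vr hind h
      rw [show (E.plus F).matches' = E.matches' + F.matches' from rfl,
        Language.mem_add] at h
      rcases h with h | h
      · obtain ⟨El, Er, hr, h1, h2⟩ := ihE vl vr hind h
        exact ⟨El, Er, RAntim.plusL hr, h1, h2⟩
      · obtain ⟨Fl, Fr, hr, h1, h2⟩ := ihF vl vr hind h
        exact ⟨Fl, Fr, RAntim.plusR hr, h1, h2⟩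
  | comp E F ihE ihF =>
      intro vl vr hind h
      rw [show (E.comp F).matches' = E.matches' * F.matches' from rfl,
        Language.mem_mul] at h
      obtain ⟨x, hx, y, hy, hxy⟩ := h
      rcases List.append_eq_append_iff.1 hxy with ⟨c, hc1, hc2⟩ | ⟨c, hc1, hc2⟩
      · -- vl = x ++ c, y = c ++ a :: vr
        subst hc1
        obtain ⟨Fl, Fr, hr, h1, h2⟩ := ihF c vr
          (fun b hb => hind b (List.mem_append.2 (Or.inr hb))) (hc2 ▸ hy)
        refine ⟨comp (Rexp I a E) Fl, Fr, RAntim.compR hr, ?_, h2⟩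
        exact Language.append_mem_mul
          ((mem_Rexp_iff hsym a E x).2
            ⟨hx, fun b hb => hind b (List.mem_append.2 (Or.inl hb))⟩) h1
      · -- x = vl ++ c, a :: vr = c ++ y
        cases c with
        | nil =>
            rw [List.append_nil] at hc1
            have hc2' : y = a :: vr := by simpa using hc2.symm
            obtain ⟨Fl, Fr, hr, h1, h2⟩ := ihF [] vr (by simp)
              (by simpa [← hc2'] using hy)
            refine ⟨comp (Rexp I a E) Fl, Fr, RAntim.compR hr, ?_, h2⟩
            have : vl ++ [] ∈ (Rexp I a E).matches' * Fl.matches' :=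
              Language.append_mem_mul ((mem_Rexp_iff hsym a E vl).2 ⟨hc1 ▸ hx, hind⟩) h1
            simpa using this
        | cons c0 t =>
            simp only [List.cons_append, List.cons.injEq] at hc2
            obtain ⟨rfl, rfl⟩ := hc2
            obtain ⟨El, Er, hr, h1, h2⟩ := ihE vl t hind (by rw [hc1] at hx; exact hx)
            exact ⟨El, comp Er F, RAntim.compL hr, h1, Language.append_mem_mul h2 hy⟩
  | star E ihE =>
      intro vl vr hind h
      rw [show E.star.matches' = E.matches'∗ from rfl,
        Language.mem_kstar_iff_exists_nonempty] at h
      obtain ⟨L, hL, hmem⟩ := h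
      -- find the block of L containing the letter a
      have key : ∀ (L : List (List α)) (w : List α), w ++ a :: vr = L.flatten →
          ∃ S1 p q S2, L = S1 ++ (p ++ a :: q) :: S2 ∧ w = S1.flatten ++ p ∧
            vr = q ++ S2.flatten := by
        intro L
        induction L with
        | nil => intro w hL; exact absurd hL (by simp)
        | cons x L ih =>
            intro w hL
            rw [List.flatten_cons] at hL
            rcases List.append_eq_append_iff.1 hL with ⟨c, hc1, hc2⟩ | ⟨c, hc1, hc2⟩
            · -- x = w ++ c, a :: vr = c ++ L.flatten
              cases c with
              | nil =>
                  rw [List.append_nil] at hc1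
                  obtain ⟨S1, p, q, S2, h1, h2, h3⟩ :=
                    ih [] (by simpa using hc2)
                  refine ⟨x :: S1, p, q, S2, by rw [h1]; rfl, ?_, h3⟩
                  rw [List.flatten_cons, List.append_assoc, ← h2, List.append_nil, hc1]
              | cons c0 t =>
                  rw [List.cons_append] at hc2
                  simp only [List.cons.injEq] at hc2
                  obtain ⟨rfl, rfl⟩ := hc2
                  exact ⟨[], w, t, L, by simp [hc1], by simp, rfl⟩
            · -- w = x ++ c, L.flatten = c ++ a :: vr
              obtain ⟨S1, p, q, S2, h1, h2, h3⟩ := ih c hc2.symm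
              refine ⟨x :: S1, p, q, S2, by rw [h1]; rfl, ?_, h3⟩
              rw [List.flatten_cons, List.append_assoc, ← h2, hc1]
      obtain ⟨S1, p, q, S2, h1, h2, h3⟩ := key L vl hL
      subst h1
      obtain ⟨El, Er, hr, hp, hq⟩ := ihE p q
        (fun b hb => hind b (h2 ▸ List.mem_append.2 (Or.inr hb)))
        ((hmem (p ++ a :: q) (List.mem_append.2 (Or.inr (List.mem_cons_self)))).1)
      refine ⟨comp (star (Rexp I a E)) El, comp Er (star E), RAntim.st hr, ?_, ?_⟩
      · rw [h2]
        refine Language.append_mem_mul ?_ hp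
        show _ ∈ (Rexp I a E).matches'∗
        refine Language.join_mem_kstar fun y hy => ?_
        refine (mem_Rexp_iff hsym a E y).2
          ⟨(hmem y (List.mem_append.2 (Or.inl hy))).1, fun b hb => hind b ?_⟩
        rw [h2]
        exact List.mem_append.2 (Or.inl (List.mem_flatten.2 ⟨y, hy, hb⟩))
      · rw [h3]
        refine Language.append_mem_mul hq ?_
        show _ ∈ E.matches'∗
        exact Language.join_mem_kstar fun y hy =>
          (hmem y (List.mem_append.2 (Or.inr (List.mem_cons_of_mem _ hy)))).1

open scoped Computability in
lemma rantim_bwd {I : α → α → Prop} (hsym : Symmetric I)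
    {E : RegularExpression α} {a : α} {El Er : RegularExpression α}
    (h : RAntim I E a El Er) :
    ∀ vl vr, vl ∈ El.matches' → vr ∈ Er.matches' →
      (∀ b ∈ vl, I b a) ∧ vl ++ a :: vr ∈ E.matches' := by
  induction h with
  | chr a =>
      intro vl vr h1 h2
      rw [show RegularExpression.epsilon.matches' = (1 : Language α) from rfl,
        Language.mem_one] at h1 h2
      subst h1; subst h2
      exact ⟨by simp, rfl⟩
  | plusL h ih =>
      intro vl vr h1 h2
      obtain ⟨ha, hb⟩ := ih vl vr h1 h2
      exact ⟨ha, Or.inl hb⟩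
  | plusR h ih =>
      intro vl vr h1 h2
      obtain ⟨ha, hb⟩ := ih vl vr h1 h2
      exact ⟨ha, Or.inr hb⟩
  | @compL E F a El Er h ih =>
      intro vl vr h1 h2
      rw [show (Er.comp F).matches' = Er.matches' * F.matches' from rfl,
        Language.mem_mul] at h2
      obtain ⟨t, ht, y, hy, rfl⟩ := h2
      obtain ⟨ha, hb⟩ := ih vl t h1 ht
      refine ⟨ha, ?_⟩
      show _ ∈ E.matches' * F.matches'
      have : (vl ++ a :: t) ++ y ∈ E.matches' * F.matches' :=
        Language.append_mem_mul hb hy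
      simpa using this
  | @compR E F a Fl Fr h ih =>
      intro vl vr h1 h2
      rw [show ((Rexp I a E).comp Fl).matches' = (Rexp I a E).matches' * Fl.matches' from rfl,
        Language.mem_mul] at h1
      obtain ⟨x, hx, p, hp, rfl⟩ := h1
      rw [mem_Rexp_iff hsym] at hx
      obtain ⟨ha, hb⟩ := ih p vr hp h2
      refine ⟨?_, ?_⟩
      · intro b hb'
        rcases List.mem_append.1 hb' with hb' | hb'
        · exact hx.2 b hb'
        · exact ha b hb'
      · show _ ∈ E.matches' * F.matches'
        have : x ++ (p ++ a :: vr) ∈ E.matches' * F.matches' :=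
          Language.append_mem_mul hx.1 hb
        simpa using this
  | @st E a El Er h ih =>
      intro vl vr h1 h2
      rw [show ((Rexp I a E).star.comp El).matches'
            = (Rexp I a E).matches'∗ * El.matches' from rfl, Language.mem_mul] at h1
      rw [show (Er.comp E.star).matches' = Er.matches' * E.matches'∗ from rfl,
        Language.mem_mul] at h2
      obtain ⟨x, hx, p, hp, rfl⟩ := h1
      obtain ⟨q, hq, y, hy, rfl⟩ := h2
      obtain ⟨ha, hb⟩ := ih p q hp hq
      rw [Language.mem_kstar] at hx
      obtain ⟨L, rfl, hL⟩ := hx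
      have hxE : ∀ b ∈ L.flatten, I b a := by
        intro b hb'
        rcases List.mem_flatten.1 hb' with ⟨y', hy', hby⟩
        exact ((mem_Rexp_iff hsym a E y').1 (hL y' hy')).2 b hby
      refine ⟨?_, ?_⟩
      · intro b hb'
        rcases List.mem_append.1 hb' with hb' | hb'
        · exact hxE b hb'
        · exact ha b hb'
      · show _ ∈ E.matches'∗
        rw [Language.mem_kstar] at hy
        obtain ⟨L', rfl, hL'⟩ := hy
        have : (L ++ (p ++ a :: q) :: L').flatten ∈ E.matches'∗ := by
          refine Language.join_mem_kstar fun y' hy' => ?_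
          rcases List.mem_append.1 hy' with h' | h'
          · exact ((mem_Rexp_iff hsym a E y').1 (hL y' h')).1
          · rcases List.mem_cons.1 h' with rfl | h'
            · exact hb
            · exact hL' y' h'
        simpa using this

/-- correctness of the refined Antimirov parts-of-derivatives along a letter. -/
theorem stmt17 {α : Type u} [Fintype α] (I : α → α → Prop)
    (hirr : Irreflexive I) (hsym : Symmetric I) (E : RegularExpression α)
    (a : α) (vl vr : List α) :
    (WIndep I vl [a] ∧ vl ++ a :: vr ∈ E.matches') ↔
      ∃ El Er, RAntim I E a El Er ∧ vl ∈ El.matches' ∧ vr ∈ Er.matches' := by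
  constructor
  · rintro ⟨h1, h2⟩
    exact rantim_fwd hsym a E vl vr (fun b hb => h1 b hb a (by simp)) h2
  · rintro ⟨El, Er, hr, h1, h2⟩
    obtain ⟨ha, hb⟩ := rantim_bwd hsym hr vl vr h1 h2
    exact ⟨fun b hb' c hc => by simp at hc; subst hc; exact ha b hb', hb⟩
end
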